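/- arXiv:2203.05108 — 5 statements merged into one kernel-verified Lean document; each statement's English description precedes it below -/
import Mathlib

section
/- Let S = {p₁,…,p_m} be a finite set of probability distributions, each on n states with values sorted nonincreasingly, let G_S be the greedy coupling output distribution, and let z ≥ 2 be an integer. Then H(G_S) ≤ H(∧S) + H(Geom_{1/z}) − log₂(z−1). -/
open Finset Real MeasureTheory ENNReal

section GCAux

variable {m n : ℕ} [NeZero m] [NeZero n]
variable (p : Fin m → ℕ → Fin n → ℝ) (G : ℕ → ℝ) (M : Fin n → ℝ)

/-- entries stay nonnegative -/
lemma gcaux_nonneg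
    (hpos : ∀ ℓ k, 0 ≤ p ℓ 0 k)
    (hG : ∀ t, G t = univ.inf' univ_nonempty fun ℓ => univ.sup' univ_nonempty (p ℓ t))
    (hstep : ∀ t ℓ, ∃ k, (∀ k', p ℓ t k' ≤ p ℓ t k) ∧
      p ℓ (t + 1) = Function.update (p ℓ t) k (p ℓ t k - G t)) :
    ∀ t ℓ k, 0 ≤ p ℓ t k := by
  intro t
  induction t with
  | zero => exact hpos
  | succ t ih =>
    intro ℓ k
    obtain ⟨k₀, hmax, hupd⟩ := hstep t ℓ
    rw [hupd]
    rcases eq_or_ne k k₀ with rfl | hne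
    · rw [Function.update_self]
      have h1 : G t ≤ univ.sup' univ_nonempty (p ℓ t) := by
        rw [hG t]; exact Finset.inf'_le _ (mem_univ ℓ)
      have h2 : univ.sup' univ_nonempty (p ℓ t) ≤ p ℓ t k := by
        exact Finset.sup'_le _ _ (fun k' _ => hmax k')
      linarith
    · rw [Function.update_of_ne hne]; exact ih ℓ k

lemma gcaux_G_nonneg
    (hpos : ∀ ℓ k, 0 ≤ p ℓ 0 k)
    (hG : ∀ t, G t = univ.inf' univ_nonempty fun ℓ => univ.sup' univ_nonempty (p ℓ t))
    (hstep : ∀ t ℓ, ∃ k, (∀ k', p ℓ t k' ≤ p ℓ t k) ∧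
      p ℓ (t + 1) = Function.update (p ℓ t) k (p ℓ t k - G t)) :
    ∀ t, 0 ≤ G t := by
  intro t
  rw [hG t]
  obtain ⟨ℓ₀, -, hℓ₀⟩ := Finset.exists_mem_eq_inf' (univ_nonempty)
    (fun ℓ => univ.sup' univ_nonempty (p ℓ t))
  rw [hℓ₀]
  have k0 : Fin n := ⟨0, Nat.pos_of_ne_zero (NeZero.ne n)⟩
  exact le_trans (gcaux_nonneg p G hpos hG hstep t ℓ₀ k0) (Finset.le_sup' _ (mem_univ k0))

/-- entries decrease in time -/
lemma gcaux_entry_mono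
    (hpos : ∀ ℓ k, 0 ≤ p ℓ 0 k)
    (hG : ∀ t, G t = univ.inf' univ_nonempty fun ℓ => univ.sup' univ_nonempty (p ℓ t))
    (hstep : ∀ t ℓ, ∃ k, (∀ k', p ℓ t k' ≤ p ℓ t k) ∧
      p ℓ (t + 1) = Function.update (p ℓ t) k (p ℓ t k - G t)) :
    ∀ t ℓ k, p ℓ (t+1) k ≤ p ℓ t k := by
  intro t ℓ k
  obtain ⟨k₀, hmax, hupd⟩ := hstep t ℓ
  rw [hupd]
  rcases eq_or_ne k k₀ with rfl | hne
  · rw [Function.update_self]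
    have := gcaux_G_nonneg p G hpos hG hstep t
    linarith
  · rw [Function.update_of_ne hne]

lemma gcaux_entry_le_init
    (hpos : ∀ ℓ k, 0 ≤ p ℓ 0 k)
    (hG : ∀ t, G t = univ.inf' univ_nonempty fun ℓ => univ.sup' univ_nonempty (p ℓ t))
    (hstep : ∀ t ℓ, ∃ k, (∀ k', p ℓ t k' ≤ p ℓ t k) ∧
      p ℓ (t + 1) = Function.update (p ℓ t) k (p ℓ t k - G t)) :
    ∀ t ℓ k, p ℓ t k ≤ p ℓ 0 k := by
  intro t
  induction t with
  | zero => exact fun ℓ k => le_refl _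
  | succ t ih => exact fun ℓ k => le_trans (gcaux_entry_mono p G hpos hG hstep t ℓ k) (ih ℓ k)

/-- mass identity -/
lemma gcaux_mass
    (hsum : ∀ ℓ, ∑ k, p ℓ 0 k = 1)
    (hstep : ∀ t ℓ, ∃ k, (∀ k', p ℓ t k' ≤ p ℓ t k) ∧
      p ℓ (t + 1) = Function.update (p ℓ t) k (p ℓ t k - G t)) :
    ∀ t ℓ, ∑ k, p ℓ t k = 1 - ∑ s ∈ range t, G s := by
  intro t
  induction t with
  | zero => intro ℓ; simp [hsum ℓ]
  | succ t ih =>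
    intro ℓ
    obtain ⟨k₀, hmax, hupd⟩ := hstep t ℓ
    rw [hupd]
    have h1 : ∑ k, Function.update (p ℓ t) k₀ (p ℓ t k₀ - G t) k
        = (p ℓ t k₀ - G t) + ∑ k ∈ univ \ {k₀}, p ℓ t k :=
      Finset.sum_update_of_mem (mem_univ k₀) _ _
    have h2 : ∑ k, p ℓ t k = ∑ k ∈ univ \ {k₀}, p ℓ t k + p ℓ t k₀ :=
      Finset.sum_eq_sum_sdiff_singleton_add (mem_univ k₀) _
    have h3 := ih ℓ
    rw [Finset.sum_range_succ]
    linarith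

end GCAux

section GCAux2

variable {m n : ℕ} [NeZero m] [NeZero n]
variable (p : Fin m → ℕ → Fin n → ℝ) (M : Fin n → ℝ)

lemma gcaux_A_eq
    (hM : ∀ i, M i =
      (univ.inf' univ_nonempty fun ℓ => ∑ j ∈ Iic i, p ℓ 0 j) - ∑ j ∈ Iio i, M j) :
    ∀ i : Fin n, ∑ j ∈ Iic i, M j =
      (univ.inf' univ_nonempty fun ℓ => ∑ j ∈ Iic i, p ℓ 0 j) := by
  intro i
  have h2 : i ∉ Iio i := by simp
  have h3 : ∑ j ∈ Iic i, M j = M i + ∑ j ∈ Iio i, M j := by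
    rw [← Finset.sum_insert h2, Finset.Iio_insert]
  rw [h3, hM i]; ring

lemma gcaux_B_le
    (hM : ∀ i, M i =
      (univ.inf' univ_nonempty fun ℓ => ∑ j ∈ Iic i, p ℓ 0 j) - ∑ j ∈ Iio i, M j) :
    ∀ (i : Fin n) (ℓ : Fin m), ∑ j ∈ Iio i, M j ≤ ∑ j ∈ Iio i, p ℓ 0 j := by
  intro i ℓ
  rcases Nat.eq_zero_or_pos (i : ℕ) with h0 | hpos'
  · have : Iio i = ∅ := by
      ext j; simp only [Finset.mem_Iio, Finset.notMem_empty, iff_false]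
      intro hj; have := Fin.lt_def.mp hj; omega
    simp [this]
  · have hi' : (i : ℕ) - 1 < n := by have := i.isLt; omega
    have hIio : Iio i = Iic (⟨(i : ℕ) - 1, hi'⟩ : Fin n) := by
      ext j
      simp only [Finset.mem_Iio, Finset.mem_Iic, Fin.lt_def, Fin.le_def]
      omega
    rw [hIio, gcaux_A_eq p M hM _]
    exact Finset.inf'_le _ (mem_univ ℓ)

lemma gcaux_M_succ_le
    (hsort : ∀ ℓ, Antitone (p ℓ 0))
    (hM : ∀ i, M i =
      (univ.inf' univ_nonempty fun ℓ => ∑ j ∈ Iic i, p ℓ 0 j) - ∑ j ∈ Iio i, M j) :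
    ∀ (i j : Fin n), (i : ℕ) + 1 = (j : ℕ) → M j ≤ M i := by
  intro i j hij
  obtain ⟨ℓ, -, hℓ⟩ := Finset.exists_mem_eq_inf' (univ_nonempty)
    (fun ℓ => ∑ j' ∈ Iic i, p ℓ 0 j')
  have hAi : ∑ j' ∈ Iic i, M j' = ∑ j' ∈ Iic i, p ℓ 0 j' := by
    rw [gcaux_A_eq p M hM i, hℓ]
  have hIioj : Iio j = Iic i := by
    ext x
    simp only [Finset.mem_Iio, Finset.mem_Iic, Fin.lt_def, Fin.le_def]
    omega
  have hIicj : Iic j = insert j (Iic i) := by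
    rw [← hIioj]; exact (Finset.Iio_insert j).symm
  have hjnot : j ∉ Iic i := by
    simp only [Finset.mem_Iic, Fin.le_def]; omega
  have h1 : M j ≤ p ℓ 0 j := by
    have hAj : ∑ j' ∈ Iic j, M j' ≤ ∑ j' ∈ Iic j, p ℓ 0 j' := by
      rw [gcaux_A_eq p M hM j]; exact Finset.inf'_le _ (mem_univ ℓ)
    rw [hIicj, Finset.sum_insert hjnot, Finset.sum_insert hjnot] at hAj
    linarith [hAi]
  have h2 : p ℓ 0 i ≤ M i := by
    have hB := gcaux_B_le p M hM i ℓ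
    have hinot : i ∉ Iio i := by simp
    have e1 : ∑ j' ∈ Iic i, M j' = M i + ∑ j' ∈ Iio i, M j' := by
      rw [← Finset.sum_insert hinot, Finset.Iio_insert]
    have e2 : ∑ j' ∈ Iic i, p ℓ 0 j' = p ℓ 0 i + ∑ j' ∈ Iio i, p ℓ 0 j' := by
      rw [← Finset.sum_insert hinot, Finset.Iio_insert]
    rw [e1, e2] at hAi
    linarith
  have h3 : p ℓ 0 j ≤ p ℓ 0 i := hsort ℓ (by rw [Fin.le_def]; omega)
  linarith

lemma gcaux_M_antitone
    (hsort : ∀ ℓ, Antitone (p ℓ 0))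
    (hM : ∀ i, M i =
      (univ.inf' univ_nonempty fun ℓ => ∑ j ∈ Iic i, p ℓ 0 j) - ∑ j ∈ Iio i, M j) :
    Antitone M := by
  have key : ∀ (d : ℕ) (i j : Fin n), (j : ℕ) = (i : ℕ) + d → M j ≤ M i := by
    intro d
    induction d with
    | zero => intro i j h; have : i = j := Fin.ext (by omega); rw [this]
    | succ d ih =>
      intro i j h
      have hlt : (i : ℕ) + d < n := by have := j.isLt; omega
      have h1 : M j ≤ M (⟨(i : ℕ) + d, hlt⟩ : Fin n) :=
        gcaux_M_succ_le p M hsort hM _ j (by simp; omega)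
      have h2 : M (⟨(i : ℕ) + d, hlt⟩ : Fin n) ≤ M i := ih i _ (by simp)
      linarith
  intro i j hij
  exact key ((j : ℕ) - (i : ℕ)) i j (by have := Fin.le_def.mp hij; omega)

lemma gcaux_M_nonneg
    (hpos : ∀ ℓ k, 0 ≤ p ℓ 0 k)
    (hM : ∀ i, M i =
      (univ.inf' univ_nonempty fun ℓ => ∑ j ∈ Iic i, p ℓ 0 j) - ∑ j ∈ Iio i, M j) :
    ∀ i, 0 ≤ M i := by
  intro i
  obtain ⟨ℓ, -, hℓ⟩ := Finset.exists_mem_eq_inf' (univ_nonempty)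
    (fun ℓ => ∑ j' ∈ Iic i, p ℓ 0 j')
  have hAi : ∑ j' ∈ Iic i, M j' = ∑ j' ∈ Iic i, p ℓ 0 j' := by
    rw [gcaux_A_eq p M hM i, hℓ]
  have hB := gcaux_B_le p M hM i ℓ
  have hinot : i ∉ Iio i := by simp
  have e1 : ∑ j' ∈ Iic i, M j' = M i + ∑ j' ∈ Iio i, M j' := by
    rw [← Finset.sum_insert hinot, Finset.Iio_insert]
  have e2 : ∑ j' ∈ Iic i, p ℓ 0 j' = p ℓ 0 i + ∑ j' ∈ Iio i, p ℓ 0 j' := by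
    rw [← Finset.sum_insert hinot, Finset.Iio_insert]
  rw [e1, e2] at hAi
  have := hpos ℓ i
  linarith

lemma gcaux_M_sum
    (hsum : ∀ ℓ, ∑ k, p ℓ 0 k = 1)
    (hM : ∀ i, M i =
      (univ.inf' univ_nonempty fun ℓ => ∑ j ∈ Iic i, p ℓ 0 j) - ∑ j ∈ Iio i, M j) :
    ∑ i, M i = 1 := by
  have hn : 0 < n := Nat.pos_of_ne_zero (NeZero.ne n)
  obtain ⟨n', rfl⟩ : ∃ n', n = n' + 1 := ⟨n - 1, by omega⟩
  have hlast : (Iic (Fin.last n')) = (univ : Finset (Fin (n' + 1))) := by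
    ext j; simp [Fin.le_last]
  have hA := gcaux_A_eq p M hM (Fin.last n')
  rw [hlast] at hA
  rw [hA]
  rw [show (univ.inf' univ_nonempty fun ℓ => ∑ j : Fin (n' + 1), p ℓ 0 j)
      = (univ.inf' univ_nonempty fun _ : Fin m => (1:ℝ)) from by
    apply Finset.inf'_congr _ rfl; intro ℓ _; exact hsum ℓ]
  exact Finset.inf'_const _ _

end GCAux2

section GCAux3

variable {m n : ℕ} [NeZero m] [NeZero n]
variable (p : Fin m → ℕ → Fin n → ℝ) (G : ℕ → ℝ) (M : Fin n → ℝ)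

lemma gcaux_decay_arith (N c g qt : ℝ) (hN : (1:ℝ) ≤ N) (h1 : 1 - c ≤ N * g)
    (ih : 1 - qt ≤ c) :
    1 - qt * (1 - 1/N) ≤ c + g := by
  have hN0 : (0:ℝ) < N := by linarith
  have e1 : (1 - c) * (1 - 1/N) ≤ qt * (1 - 1/N) := by
    apply mul_le_mul_of_nonneg_right (by linarith)
    have : 1/N ≤ 1 := by rw [div_le_one hN0]; linarith
    linarith
  have e3 : (1 - c) * (1/N) ≤ g := by
    rw [mul_one_div, div_le_iff₀ hN0]
    linarith [mul_comm g N]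
  nlinarith [e1, e3]

/-- the key lower bound: (i+1) * G t ≥ A i - c t -/
lemma gcaux_key_lb
    (hpos : ∀ ℓ k, 0 ≤ p ℓ 0 k)
    (hsum : ∀ ℓ, ∑ k, p ℓ 0 k = 1)
    (hG : ∀ t, G t = univ.inf' univ_nonempty fun ℓ => univ.sup' univ_nonempty (p ℓ t))
    (hstep : ∀ t ℓ, ∃ k, (∀ k', p ℓ t k' ≤ p ℓ t k) ∧
      p ℓ (t + 1) = Function.update (p ℓ t) k (p ℓ t k - G t))
    (hM : ∀ i, M i =
      (univ.inf' univ_nonempty fun ℓ => ∑ j ∈ Iic i, p ℓ 0 j) - ∑ j ∈ Iio i, M j) :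
    ∀ (t : ℕ) (i : Fin n),
      (∑ j ∈ Iic i, M j) - (∑ s ∈ range t, G s) ≤ ((i : ℕ) + 1) * G t := by
  intro t i
  obtain ⟨ℓ₀, -, hℓ₀⟩ := Finset.exists_mem_eq_inf' (univ_nonempty)
    (fun ℓ => univ.sup' univ_nonempty (p ℓ t))
  have hGt : G t = univ.sup' univ_nonempty (p ℓ₀ t) := (hG t).trans hℓ₀
  have hA : (∑ j ∈ Iic i, M j) ≤ ∑ j ∈ Iic i, p ℓ₀ 0 j := by
    rw [gcaux_A_eq p M hM i]
    exact Finset.inf'_le _ (mem_univ ℓ₀)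
  have hinit := gcaux_entry_le_init p G hpos hG hstep
  have hmass := gcaux_mass p G hsum hstep t ℓ₀
  have hdrop : ∑ j ∈ Iic i, (p ℓ₀ 0 j - p ℓ₀ t j) ≤ ∑ s ∈ range t, G s := by
    have hsub : ∑ j ∈ Iic i, (p ℓ₀ 0 j - p ℓ₀ t j) ≤ ∑ j, (p ℓ₀ 0 j - p ℓ₀ t j) :=
      Finset.sum_le_sum_of_subset_of_nonneg (Finset.subset_univ _)
        (fun j _ _ => by have := hinit t ℓ₀ j; linarith)
    have htot : ∑ j, (p ℓ₀ 0 j - p ℓ₀ t j) = ∑ s ∈ range t, G s := by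
      rw [Finset.sum_sub_distrib, hsum ℓ₀, hmass]; ring
    linarith
  have hsup : ∑ j ∈ Iic i, p ℓ₀ t j ≤ ((i : ℕ) + 1) * G t := by
    have hcard : (Iic i).card = (i : ℕ) + 1 := Fin.card_Iic i
    have := Finset.sum_le_card_nsmul (Iic i) (p ℓ₀ t) (G t)
      (fun j _ => by rw [hGt]; exact Finset.le_sup' _ (mem_univ j))
    rw [hcard] at this
    simpa [nsmul_eq_mul] using this
  have hexp : ∑ j ∈ Iic i, (p ℓ₀ 0 j - p ℓ₀ t j)
      = ∑ j ∈ Iic i, p ℓ₀ 0 j - ∑ j ∈ Iic i, p ℓ₀ t j := Finset.sum_sub_distrib _ _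
  linarith

lemma gcaux_G_antitone
    (hpos : ∀ ℓ k, 0 ≤ p ℓ 0 k)
    (hG : ∀ t, G t = univ.inf' univ_nonempty fun ℓ => univ.sup' univ_nonempty (p ℓ t))
    (hstep : ∀ t ℓ, ∃ k, (∀ k', p ℓ t k' ≤ p ℓ t k) ∧
      p ℓ (t + 1) = Function.update (p ℓ t) k (p ℓ t k - G t)) :
    Antitone G := by
  apply antitone_nat_of_succ_le
  intro t
  obtain ⟨ℓ₀, -, hℓ₀⟩ := Finset.exists_mem_eq_inf' (univ_nonempty)
    (fun ℓ => univ.sup' univ_nonempty (p ℓ t))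
  have h1 : G (t+1) ≤ univ.sup' univ_nonempty (p ℓ₀ (t+1)) := by
    rw [hG (t+1)]; exact Finset.inf'_le _ (mem_univ ℓ₀)
  have h2 : univ.sup' univ_nonempty (p ℓ₀ (t+1)) ≤ univ.sup' univ_nonempty (p ℓ₀ t) := by
    apply Finset.sup'_le
    intro k _
    exact le_trans (gcaux_entry_mono p G hpos hG hstep t ℓ₀ k) (Finset.le_sup' _ (mem_univ k))
  rw [hG t, hℓ₀]
  exact le_trans h1 h2

lemma gcaux_c_le_one
    (hpos : ∀ ℓ k, 0 ≤ p ℓ 0 k)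
    (hsum : ∀ ℓ, ∑ k, p ℓ 0 k = 1)
    (hG : ∀ t, G t = univ.inf' univ_nonempty fun ℓ => univ.sup' univ_nonempty (p ℓ t))
    (hstep : ∀ t ℓ, ∃ k, (∀ k', p ℓ t k' ≤ p ℓ t k) ∧
      p ℓ (t + 1) = Function.update (p ℓ t) k (p ℓ t k - G t)) :
    ∀ t, ∑ s ∈ range t, G s ≤ 1 := by
  intro t
  have ℓ₀ : Fin m := ⟨0, Nat.pos_of_ne_zero (NeZero.ne m)⟩
  have hmass := gcaux_mass p G hsum hstep t ℓ₀
  have hnn : (0:ℝ) ≤ ∑ k, p ℓ₀ t k :=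
    Finset.sum_nonneg (fun k _ => gcaux_nonneg p G hpos hG hstep t ℓ₀ k)
  linarith

lemma gcaux_G_summable
    (hpos : ∀ ℓ k, 0 ≤ p ℓ 0 k)
    (hsum : ∀ ℓ, ∑ k, p ℓ 0 k = 1)
    (hG : ∀ t, G t = univ.inf' univ_nonempty fun ℓ => univ.sup' univ_nonempty (p ℓ t))
    (hstep : ∀ t ℓ, ∃ k, (∀ k', p ℓ t k' ≤ p ℓ t k) ∧
      p ℓ (t + 1) = Function.update (p ℓ t) k (p ℓ t k - G t)) :
    Summable G :=
  summable_of_sum_range_le (gcaux_G_nonneg p G hpos hG hstep)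
    (gcaux_c_le_one p G hpos hsum hG hstep)

lemma gcaux_G_tsum_one
    (hpos : ∀ ℓ k, 0 ≤ p ℓ 0 k)
    (hsum : ∀ ℓ, ∑ k, p ℓ 0 k = 1)
    (hG : ∀ t, G t = univ.inf' univ_nonempty fun ℓ => univ.sup' univ_nonempty (p ℓ t))
    (hstep : ∀ t ℓ, ∃ k, (∀ k', p ℓ t k' ≤ p ℓ t k) ∧
      p ℓ (t + 1) = Function.update (p ℓ t) k (p ℓ t k - G t))
    (hM : ∀ i, M i =
      (univ.inf' univ_nonempty fun ℓ => ∑ j ∈ Iic i, p ℓ 0 j) - ∑ j ∈ Iio i, M j) :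
    ∑' t, G t = 1 := by
  have hn : 0 < n := Nat.pos_of_ne_zero (NeZero.ne n)
  have hMsum : ∑ i, M i = 1 := gcaux_M_sum p M hsum hM
  obtain ⟨n', rfl⟩ : ∃ n', n = n' + 1 := ⟨n - 1, by omega⟩
  have hlast : (Iic (Fin.last n')) = (univ : Finset (Fin (n' + 1))) := by
    ext j; simp [Fin.le_last]
  have hkey := gcaux_key_lb p G M hpos hsum hG hstep hM
  have hGlow : ∀ t, 1 - ∑ s ∈ range t, G s ≤ (n' + 1 : ℝ) * G t := by
    intro t
    have := hkey t (Fin.last n')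
    rw [hlast, hMsum] at this
    simpa [Fin.val_last] using this
  have hN1 : (1:ℝ) ≤ (n' + 1 : ℝ) := by
    have : (0:ℝ) ≤ (n' : ℝ) := Nat.cast_nonneg n'
    linarith
  have hclow : ∀ t, 1 - (1 - 1/(n' + 1 : ℝ)) ^ t ≤ ∑ s ∈ range t, G s := by
    intro t
    induction t with
    | zero => simp
    | succ t ih =>
      rw [Finset.sum_range_succ, pow_succ]
      exact gcaux_decay_arith (n' + 1 : ℝ) _ _ _ hN1 (hGlow t) ih
  have hq0 : 0 ≤ (1 - 1/(n' + 1 : ℝ)) := by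
    have : 1/(n' + 1 : ℝ) ≤ 1 := by
      rw [div_le_one (by positivity)]; linarith
    linarith
  have hq1 : (1 - 1/(n' + 1 : ℝ)) < 1 := by
    have : 0 < 1/(n' + 1 : ℝ) := by positivity
    linarith
  have hS : Summable G := gcaux_G_summable p G hpos hsum hG hstep
  have h1 : Filter.Tendsto (fun t => ∑ s ∈ range t, G s) Filter.atTop (nhds (∑' t, G t)) :=
    hS.hasSum.tendsto_sum_nat
  have h2 : Filter.Tendsto (fun t : ℕ => 1 - (1 - 1/(n' + 1 : ℝ)) ^ t) Filter.atTop (nhds 1) := by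
    have := tendsto_pow_atTop_nhds_zero_of_lt_one hq0 hq1
    have h3 := Filter.Tendsto.const_sub (1:ℝ) this
    simpa using h3
  have h4 : Filter.Tendsto (fun t => ∑ s ∈ range t, G s) Filter.atTop (nhds 1) := by
    apply tendsto_of_tendsto_of_tendsto_of_le_of_le h2 tendsto_const_nhds
    · exact fun t => hclow t
    · exact fun t => gcaux_c_le_one p G hpos hsum hG hstep t
  exact tendsto_nhds_unique h1 h4

end GCAux3

section GCAux4

variable {m n : ℕ} [NeZero m] [NeZero n]
variable (p : Fin m → ℕ → Fin n → ℝ) (G : ℕ → ℝ) (M : Fin n → ℝ)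

lemma gcaux_G_le_mass
    (hpos : ∀ ℓ k, 0 ≤ p ℓ 0 k)
    (hsum : ∀ ℓ, ∑ k, p ℓ 0 k = 1)
    (hG : ∀ t, G t = univ.inf' univ_nonempty fun ℓ => univ.sup' univ_nonempty (p ℓ t))
    (hstep : ∀ t ℓ, ∃ k, (∀ k', p ℓ t k' ≤ p ℓ t k) ∧
      p ℓ (t + 1) = Function.update (p ℓ t) k (p ℓ t k - G t)) :
    ∀ t, G t ≤ 1 - ∑ s ∈ range t, G s := by
  intro t
  obtain ⟨ℓ₀, -, hℓ₀⟩ := Finset.exists_mem_eq_inf' (univ_nonempty)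
    (fun ℓ => univ.sup' univ_nonempty (p ℓ t))
  have hGt : G t = univ.sup' univ_nonempty (p ℓ₀ t) := (hG t).trans hℓ₀
  obtain ⟨k₀, -, hk₀⟩ := Finset.exists_mem_eq_sup' (univ_nonempty) (p ℓ₀ t)
  have h1 : G t = p ℓ₀ t k₀ := hGt.trans hk₀
  have h2 : p ℓ₀ t k₀ ≤ ∑ k, p ℓ₀ t k :=
    Finset.single_le_sum (fun k _ => gcaux_nonneg p G hpos hG hstep t ℓ₀ k) (mem_univ k₀)
  rw [gcaux_mass p G hsum hstep t ℓ₀] at h2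
  linarith

lemma gcaux_G_le_one
    (hpos : ∀ ℓ k, 0 ≤ p ℓ 0 k)
    (hsum : ∀ ℓ, ∑ k, p ℓ 0 k = 1)
    (hG : ∀ t, G t = univ.inf' univ_nonempty fun ℓ => univ.sup' univ_nonempty (p ℓ t))
    (hstep : ∀ t ℓ, ∃ k, (∀ k', p ℓ t k' ≤ p ℓ t k) ∧
      p ℓ (t + 1) = Function.update (p ℓ t) k (p ℓ t k - G t)) :
    ∀ t, G t ≤ 1 := by
  intro t
  have h1 := gcaux_G_le_mass p G hpos hsum hG hstep t
  have h2 : 0 ≤ ∑ s ∈ range t, G s :=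
    Finset.sum_nonneg (fun s _ => gcaux_G_nonneg p G hpos hG hstep s)
  linarith

/-- the KEY threshold inequality: the mass of the greedy output strictly below
level `s` is at most `∑ⱼ min(M j, s)`. -/
lemma gcaux_key_s
    (hsort : ∀ ℓ, Antitone (p ℓ 0))
    (hpos : ∀ ℓ k, 0 ≤ p ℓ 0 k)
    (hsum : ∀ ℓ, ∑ k, p ℓ 0 k = 1)
    (hG : ∀ t, G t = univ.inf' univ_nonempty fun ℓ => univ.sup' univ_nonempty (p ℓ t))
    (hstep : ∀ t ℓ, ∃ k, (∀ k', p ℓ t k' ≤ p ℓ t k) ∧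
      p ℓ (t + 1) = Function.update (p ℓ t) k (p ℓ t k - G t))
    (hM : ∀ i, M i =
      (univ.inf' univ_nonempty fun ℓ => ∑ j ∈ Iic i, p ℓ 0 j) - ∑ j ∈ Iio i, M j) :
    ∀ s : ℝ, 0 < s →
      (∑' t, (if G t < s then G t else 0)) ≤ ∑ j, min (M j) s := by
  intro s hs
  have hGnn := gcaux_G_nonneg p G hpos hG hstep
  have hGanti := gcaux_G_antitone p G hpos hG hstep
  have hSum := gcaux_G_summable p G hpos hsum hG hstep
  have htsum1 := gcaux_G_tsum_one p G M hpos hsum hG hstep hM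
  have hex : ∃ t, G t < s := by
    by_contra hcon
    push_neg at hcon
    obtain ⟨t, ht⟩ := exists_nat_gt (1/s)
    have h1 : (t : ℝ) * s ≤ ∑ u ∈ range t, G u := by
      have := Finset.card_nsmul_le_sum (range t) G s (fun u _ => hcon u)
      simpa [Finset.card_range, nsmul_eq_mul] using this
    have h2 := gcaux_c_le_one p G hpos hsum hG hstep t
    have h3 : 1 < (t:ℝ) * s := by
      rw [div_lt_iff₀ hs] at ht
      linarith
    linarith
  set T := Nat.find hex with hTdef
  have hTlt : G T < s := Nat.find_spec hex
  have hTge : ∀ t, t < T → s ≤ G t := fun t h => le_of_not_gt (Nat.find_min hex h)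
  -- E_M(s) ≤ c T
  have hE : ∑ j, max (M j - s) 0 ≤ ∑ u ∈ range T, G u := by
    by_cases hj : ∃ j, s < M j
    · have hF : (univ.filter (fun j => s < M j)).Nonempty := by
        obtain ⟨j, hjj⟩ := hj
        exact ⟨j, by simp [hjj]⟩
      set i₀ := (univ.filter (fun j => s < M j)).max' hF with hi₀
      have hi₀mem : s < M i₀ := by
        have := Finset.max'_mem _ hF
        simpa using (Finset.mem_filter.mp this).2
      have hManti := gcaux_M_antitone p M hsort hM
      have hfilter : univ.filter (fun j => s < M j) = Iic i₀ := by
        ext j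
        simp only [Finset.mem_filter, Finset.mem_univ, true_and, Finset.mem_Iic]
        constructor
        · intro hjs; exact Finset.le_max' _ j (by simp [hjs])
        · intro hji; exact lt_of_lt_of_le hi₀mem (hManti hji)
      have he1 : ∑ j, max (M j - s) 0 = ∑ j ∈ Iic i₀, (M j - s) := by
        rw [← hfilter, Finset.sum_filter]
        apply Finset.sum_congr rfl
        intro j _
        rcases lt_or_ge s (M j) with h | h
        · rw [if_pos h, max_eq_left (by linarith)]
        · rw [if_neg (not_lt.mpr h), max_eq_right (by linarith)]
      have he2 : ∑ j ∈ Iic i₀, (M j - s) = (∑ j ∈ Iic i₀, M j) - ((i₀:ℕ)+1 : ℝ) * s := by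
        rw [Finset.sum_sub_distrib, Finset.sum_const, Fin.card_Iic, nsmul_eq_mul]
        push_cast
        ring
      have h3 := gcaux_key_lb p G M hpos hsum hG hstep hM T i₀
      have h4 : ((i₀:ℕ)+1 : ℝ) * G T ≤ ((i₀:ℕ)+1 : ℝ) * s :=
        mul_le_mul_of_nonneg_left (le_of_lt hTlt) (by positivity)
      rw [he1, he2]
      linarith
    · push_neg at hj
      have hzz : ∑ j, max (M j - s) 0 = 0 := Finset.sum_eq_zero (fun j _ => by
        have := hj j
        apply max_eq_right
        linarith)
      rw [hzz]
      exact Finset.sum_nonneg (fun u _ => hGnn u)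
  -- compute the truncated tsum
  have hfs : Summable (fun t => if G t < s then G t else 0) := by
    apply Summable.of_nonneg_of_le _ _ hSum
    · intro t; split <;> simp [hGnn t]
    · intro t; split <;> simp [hGnn t]
  have hzero : ∑ u ∈ range T, (if G u < s then G u else 0) = 0 :=
    Finset.sum_eq_zero (fun u hu => if_neg (not_lt.mpr (hTge u (Finset.mem_range.mp hu))))
  have htail : (∑' u : ℕ, (if G (u + T) < s then G (u + T) else 0)) = ∑' u : ℕ, G (u + T) :=
    tsum_congr (fun u => if_pos (lt_of_le_of_lt (hGanti (Nat.le_add_left T u)) hTlt))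
  have hsplit := Summable.sum_add_tsum_nat_add (f := fun t => if G t < s then G t else 0) T hfs
  have hGsplit := Summable.sum_add_tsum_nat_add (f := G) T hSum
  rw [htsum1] at hGsplit
  have hval : (∑' t, (if G t < s then G t else 0)) = 1 - ∑ u ∈ range T, G u := by
    rw [← hsplit, hzero, htail]
    linarith
  rw [hval]
  have hmin : ∀ j, min (M j) s = M j - max (M j - s) 0 := by
    intro j
    rcases le_total (M j) s with h | h
    · rw [min_eq_left h, max_eq_right (by linarith)]; ring
    · rw [min_eq_right h, max_eq_left (by linarith)]; ring
  have hMsum := gcaux_M_sum p M hsum hM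
  have : ∑ j, min (M j) s = 1 - ∑ j, max (M j - s) 0 := by
    rw [show ∑ j, min (M j) s = ∑ j, (M j - max (M j - s) 0) from
      Finset.sum_congr rfl (fun j _ => hmin j), Finset.sum_sub_distrib, hMsum]
  rw [this]
  linarith

end GCAux4

/-- per-term integral: ∫_{(a,1]} a/x dx = a log(1/a) -/
lemma gcaux_int_A (a : ℝ) (ha : 0 ≤ a) (ha1 : a ≤ 1) :
    ∫⁻ x in Set.Ioc a 1, ENNReal.ofReal (a * x⁻¹) = ENNReal.ofReal (a * Real.log a⁻¹) := by
  rcases eq_or_lt_of_le ha with rfl | hapos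
  · simp
  · have hInt : IntegrableOn (fun x => a * x⁻¹) (Set.Ioc a 1) volume := by
      apply IntegrableOn.mono_set _ Set.Ioc_subset_Icc_self
      apply ContinuousOn.integrableOn_compact isCompact_Icc
      apply ContinuousOn.mul continuousOn_const
      apply ContinuousOn.inv₀ continuousOn_id
      intro x hx
      exact ne_of_gt (lt_of_lt_of_le hapos hx.1)
    rw [← MeasureTheory.ofReal_integral_eq_lintegral_ofReal hInt]
    · congr 1
      have h1 : ∫ x in Set.Ioc a 1, a * x⁻¹ = ∫ x in a..1, a * x⁻¹ :=
        (intervalIntegral.integral_of_le ha1).symm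
      rw [h1, intervalIntegral.integral_const_mul, integral_inv_of_pos hapos one_pos]
      rw [one_div]
    · filter_upwards [ae_restrict_mem measurableSet_Ioc] with x hx
      have hx0 : 0 < x := lt_of_le_of_lt ha hx.1
      show (0:ℝ) ≤ a * x⁻¹
      positivity

/-- per-level integral: ∫_{(0,1]} min(b,x)/x dx = b + b log(1/b) -/
lemma gcaux_int_B (b : ℝ) (hb : 0 ≤ b) (hb1 : b ≤ 1) :
    ∫⁻ x in Set.Ioc (0:ℝ) 1, ENNReal.ofReal (min b x * x⁻¹)
      = ENNReal.ofReal (b + b * Real.log b⁻¹) := by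
  rcases eq_or_lt_of_le hb with rfl | hbpos
  · rw [setLIntegral_congr_fun_ae (g := fun _ => (0:ℝ≥0∞)) measurableSet_Ioc
      (ae_of_all _ (fun x (hx : x ∈ Set.Ioc (0:ℝ) 1) => by
        rw [min_eq_left (le_of_lt hx.1)]
        simp))]
    simp
  · have hunion : Set.Ioc (0:ℝ) b ∪ Set.Ioc b 1 = Set.Ioc (0:ℝ) 1 :=
      Set.Ioc_union_Ioc_eq_Ioc (le_of_lt hbpos) hb1
    rw [← hunion, lintegral_union measurableSet_Ioc (Set.Ioc_disjoint_Ioc_of_le le_rfl)]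
    have hp1 : ∫⁻ x in Set.Ioc (0:ℝ) b, ENNReal.ofReal (min b x * x⁻¹) = ENNReal.ofReal b := by
      rw [setLIntegral_congr_fun_ae (g := fun _ => (1:ℝ≥0∞)) measurableSet_Ioc
        (ae_of_all _ (fun x (hx : x ∈ Set.Ioc (0:ℝ) b) => by
          rw [min_eq_right hx.2, mul_inv_cancel₀ (ne_of_gt hx.1)]
          simp))]
      rw [setLIntegral_const, Real.volume_Ioc]
      simp
    have hp2 : ∫⁻ x in Set.Ioc b 1, ENNReal.ofReal (min b x * x⁻¹)
        = ENNReal.ofReal (b * Real.log b⁻¹) := by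
      rw [setLIntegral_congr_fun_ae (g := fun x => ENNReal.ofReal (b * x⁻¹)) measurableSet_Ioc
        (ae_of_all _ (fun x (hx : x ∈ Set.Ioc b 1) => by
          rw [min_eq_left (le_of_lt hx.1)]))]
      exact gcaux_int_A b hb hb1
    rw [hp1, hp2, ← ENNReal.ofReal_add hb (by
      have hli : Real.log b⁻¹ = - Real.log b := by rw [Real.log_inv]
      rw [hli]
      have hlb : Real.log b ≤ 0 := Real.log_nonpos hb hb1
      nlinarith)]

/-- main ENNReal-valued entropy bound -/
lemma gcaux_main_enn {n : ℕ} (G : ℕ → ℝ) (M : Fin n → ℝ)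
    (hGnn : ∀ t, 0 ≤ G t) (hG1 : ∀ t, G t ≤ 1) (hSum : Summable G)
    (hMnn : ∀ j, 0 ≤ M j) (hM1 : ∀ j, M j ≤ 1)
    (hkey : ∀ s : ℝ, 0 < s → (∑' t, (if G t < s then G t else 0)) ≤ ∑ j, min (M j) s) :
    ∑' t, ENNReal.ofReal (G t * Real.log (G t)⁻¹)
      ≤ ∑ j, ENNReal.ofReal (M j + M j * Real.log (M j)⁻¹) := by
  set F : ℕ → ℝ → ℝ≥0∞ :=
    fun t => (Set.Ioc (G t) 1).indicator (fun x => ENNReal.ofReal (G t * x⁻¹)) with hF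
  have hFmeas : ∀ t, Measurable (F t) := fun t =>
    (Measurable.ennreal_ofReal (measurable_const.mul measurable_inv)).indicator measurableSet_Ioc
  have hFint : ∀ t, ∫⁻ x, F t x = ENNReal.ofReal (G t * Real.log (G t)⁻¹) := by
    intro t
    simp only [hF]
    rw [lintegral_indicator measurableSet_Ioc]
    exact gcaux_int_A (G t) (hGnn t) (hG1 t)
  have hpoint : ∀ x : ℝ, (∑' t, F t x)
      ≤ (Set.Ioc (0:ℝ) 1).indicator (fun x => ∑ j, ENNReal.ofReal (min (M j) x * x⁻¹)) x := by
    intro x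
    by_cases hx : x ∈ Set.Ioc (0:ℝ) 1
    · have hx0 : 0 < x := hx.1
      have hx1 : x ≤ 1 := hx.2
      have hFx : ∀ t, F t x = ENNReal.ofReal ((if G t < x then G t else 0) * x⁻¹) := by
        intro t
        by_cases h : G t < x
        · simp only [hF]
          rw [Set.indicator_of_mem (show x ∈ Set.Ioc (G t) 1 from ⟨h, hx1⟩), if_pos h]
        · simp only [hF]
          rw [Set.indicator_of_notMem (fun hmem => h hmem.1), if_neg h]
          simp
      have hite_nn : ∀ t, 0 ≤ (if G t < x then G t else 0) := by
        intro t; split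
        · exact hGnn t
        · exact le_rfl
      have hite_le : ∀ t, (if G t < x then G t else 0) ≤ G t := by
        intro t; split
        · exact le_rfl
        · exact hGnn t
      have hsum_ite : Summable (fun t => if G t < x then G t else 0) :=
        Summable.of_nonneg_of_le hite_nn hite_le hSum
      rw [Set.indicator_of_mem hx]
      calc ∑' t, F t x
          = ∑' t, ENNReal.ofReal ((if G t < x then G t else 0) * x⁻¹) := tsum_congr hFx
        _ = ENNReal.ofReal (∑' t, (if G t < x then G t else 0) * x⁻¹) := by
            rw [ENNReal.ofReal_tsum_of_nonneg
              (fun t => mul_nonneg (hite_nn t) (inv_nonneg.mpr hx0.le))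
              (hsum_ite.mul_right _)]
        _ ≤ ENNReal.ofReal ((∑ j, min (M j) x) * x⁻¹) := by
            apply ENNReal.ofReal_le_ofReal
            rw [tsum_mul_right]
            exact mul_le_mul_of_nonneg_right (hkey x hx0) (inv_nonneg.mpr hx0.le)
        _ = ∑ j, ENNReal.ofReal (min (M j) x * x⁻¹) := by
            rw [Finset.sum_mul, ENNReal.ofReal_sum_of_nonneg
              (fun j _ => mul_nonneg (le_min (hMnn j) hx0.le) (inv_nonneg.mpr hx0.le))]
    · rw [Set.indicator_of_notMem hx]
      have hz : ∀ t, F t x = 0 := by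
        intro t
        simp only [hF]
        exact Set.indicator_of_notMem
          (fun hmem => hx ⟨lt_of_le_of_lt (hGnn t) hmem.1, hmem.2⟩) _
      rw [tsum_congr hz, tsum_zero]
  calc ∑' t, ENNReal.ofReal (G t * Real.log (G t)⁻¹)
      = ∑' t, ∫⁻ x, F t x := tsum_congr (fun t => (hFint t).symm)
    _ = ∫⁻ x, ∑' t, F t x := (lintegral_tsum (fun t => (hFmeas t).aemeasurable)).symm
    _ ≤ ∫⁻ x, (Set.Ioc (0:ℝ) 1).indicator
          (fun x => ∑ j, ENNReal.ofReal (min (M j) x * x⁻¹)) x := lintegral_mono hpoint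
    _ = ∑ j, ∫⁻ x in Set.Ioc (0:ℝ) 1, ENNReal.ofReal (min (M j) x * x⁻¹) := by
        rw [lintegral_indicator measurableSet_Ioc]
        exact lintegral_finset_sum _ (fun j _ =>
          Measurable.ennreal_ofReal ((measurable_const.min measurable_id).mul measurable_inv))
    _ = ∑ j, ENNReal.ofReal (M j + M j * Real.log (M j)⁻¹) :=
        Finset.sum_congr rfl (fun j _ => gcaux_int_B (M j) (hMnn j) (hM1 j))

/-- entropy of the geometric distribution, in nats -/
lemma gcaux_geom_tsum (γ : ℝ) (h0 : 0 < γ) (h1 : γ < 1) :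
    ∑' t : ℕ, (γ * (1-γ)^t) * Real.log ((γ * (1-γ)^t))⁻¹
      = Real.log γ⁻¹ + ((1-γ)/γ) * Real.log (1-γ)⁻¹ := by
  have hr0 : 0 < 1 - γ := by linarith
  have hrlt : 1 - γ < 1 := by linarith
  have hnorm : ‖1 - γ‖ < 1 := by rw [Real.norm_eq_abs, abs_of_pos hr0]; exact hrlt
  have hterm : ∀ t : ℕ, (γ * (1-γ)^t) * Real.log ((γ * (1-γ)^t))⁻¹
      = (γ * Real.log γ⁻¹) * (1-γ)^t + (γ * Real.log (1-γ)⁻¹) * ((t:ℝ) * (1-γ)^t) := by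
    intro t
    have hp : (0:ℝ) < (1-γ)^t := pow_pos hr0 t
    rw [Real.log_inv, Real.log_mul (ne_of_gt h0) (ne_of_gt hp), Real.log_pow,
      Real.log_inv, Real.log_inv]
    ring
  rw [tsum_congr hterm]
  have hs1 : Summable (fun t : ℕ => (γ * Real.log γ⁻¹) * (1-γ)^t) :=
    (summable_geometric_of_lt_one (le_of_lt hr0) hrlt).mul_left _
  have hs2' : Summable (fun t : ℕ => (t:ℝ) * (1-γ)^t) := by
    have := summable_norm_pow_mul_geometric_of_norm_lt_one 1 hnorm
    simp only [pow_one] at this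
    exact this.of_norm
  have hs2 : Summable (fun t : ℕ => (γ * Real.log (1-γ)⁻¹) * ((t:ℝ) * (1-γ)^t)) :=
    hs2'.mul_left _
  rw [Summable.tsum_add hs1 hs2, tsum_mul_left, tsum_mul_left,
    tsum_geometric_of_lt_one (le_of_lt hr0) hrlt,
    tsum_coe_mul_geometric_of_norm_lt_one hnorm]
  have e1 : 1 - (1 - γ) = γ := by ring
  rw [e1]
  field_simp

/-- the numeric inequality 1 ≤ x (log x - log (x-1)) for x ≥ 2 -/
lemma gcaux_numeric (x : ℝ) (hx : 2 ≤ x) :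
    1 ≤ x * (Real.log x - Real.log (x - 1)) := by
  have hx0 : 0 < x := by linarith
  have hx1 : 0 < x - 1 := by linarith
  have h1 : 1 - 1/x ≤ Real.exp (-(1/x)) := by
    have := Real.add_one_le_exp (-(1/x))
    linarith
  have h2 : 0 < 1 - 1/x := by
    have : 1/x < 1 := by rw [div_lt_one hx0]; linarith
    linarith
  have h3 : Real.log (1 - 1/x) ≤ -(1/x) := by
    calc Real.log (1 - 1/x) ≤ Real.log (Real.exp (-(1/x))) := Real.log_le_log h2 h1
      _ = -(1/x) := Real.log_exp _
  have h4 : 1 - 1/x = (x-1)/x := by field_simp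
  have h5 : Real.log ((x-1)/x) = Real.log (x-1) - Real.log x :=
    Real.log_div (ne_of_gt hx1) (ne_of_gt hx0)
  have h6 : Real.log (x-1) - Real.log x ≤ -(1/x) := by
    rw [← h5, ← h4]; exact h3
  have h7 : x * (Real.log (x-1) - Real.log x) ≤ x * (-(1/x)) :=
    mul_le_mul_of_nonneg_left h6 hx0.le
  have h8 : x * (-(1/x)) = -1 := by field_simp
  have h9 : x * (Real.log x - Real.log (x-1)) = -(x * (Real.log (x-1) - Real.log x)) := by ring
  linarith

/-- **Corollary 1.**  With `G` the greedy coupling output sequence for `S = {p₁,…,p_m}`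
and `M` the sorted value sequence of `∧S`:  for every integer `z ≥ 2`,
`H(G_S) ≤ H(∧S) + H(Geom_{1/z}) − log₂(z−1)`, where
`Geom_{1/z}(t) = (1/z)(1−1/z)^{t-1}` (here `t : ℕ` is 0-indexed). -/
theorem greedy_coupling_entropy_le_meet_add_geom
    (m n : ℕ) [NeZero m] [NeZero n]
    (p : Fin m → ℕ → Fin n → ℝ)      -- residuals: `p ℓ t` before step `t`; `p ℓ 0 = p_ℓ`
    (G : ℕ → ℝ)                       -- greedy output sequence
    (M : Fin n → ℝ)                   -- sorted values of ∧S
    (hsort : ∀ ℓ, Antitone (p ℓ 0))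
    (hpos : ∀ ℓ k, 0 ≤ p ℓ 0 k)
    (hsum : ∀ ℓ, ∑ k, p ℓ 0 k = 1)
    (hG : ∀ t, G t = univ.inf' univ_nonempty fun ℓ => univ.sup' univ_nonempty (p ℓ t))
    (hstep : ∀ t ℓ, ∃ k, (∀ k', p ℓ t k' ≤ p ℓ t k) ∧
      p ℓ (t + 1) = Function.update (p ℓ t) k (p ℓ t k - G t))
    (hM : ∀ i, M i =
      (univ.inf' univ_nonempty fun ℓ => ∑ j ∈ Iic i, p ℓ 0 j) - ∑ j ∈ Iio i, M j)
    (z : ℕ) (hz : 2 ≤ z) :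
    (∑' t : ℕ, G t * Real.logb 2 (G t)⁻¹) ≤
      (∑ i, M i * Real.logb 2 (M i)⁻¹) +
        (∑' t : ℕ, ((1 / (z : ℝ)) * (1 - 1 / (z : ℝ)) ^ t) *
          Real.logb 2 ((1 / (z : ℝ)) * (1 - 1 / (z : ℝ)) ^ t)⁻¹) -
        Real.logb 2 ((z : ℝ) - 1) := by
  have hGnn := gcaux_G_nonneg p G hpos hG hstep
  have hG1 := gcaux_G_le_one p G hpos hsum hG hstep
  have hSum := gcaux_G_summable p G hpos hsum hG hstep
  have hMnn := gcaux_M_nonneg p M hpos hM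
  have hMsum := gcaux_M_sum p M hsum hM
  have hM1 : ∀ j, M j ≤ 1 := by
    intro j
    have h := Finset.single_le_sum (fun i (_ : i ∈ univ) => hMnn i) (mem_univ j)
    rw [hMsum] at h
    exact h
  have hkey := gcaux_key_s p G M hsort hpos hsum hG hstep hM
  have henn := gcaux_main_enn G M hGnn hG1 hSum hMnn hM1 hkey
  have hlog2 : 0 < Real.log 2 := Real.log_pos one_lt_two
  have hGterm : ∀ t, 0 ≤ G t * Real.log (G t)⁻¹ := by
    intro t
    rw [Real.log_inv]
    exact mul_nonneg (hGnn t) (neg_nonneg.mpr (Real.log_nonpos (hGnn t) (hG1 t)))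
  have hMterm : ∀ j, 0 ≤ M j * Real.log (M j)⁻¹ := by
    intro j
    rw [Real.log_inv]
    exact mul_nonneg (hMnn j) (neg_nonneg.mpr (Real.log_nonpos (hMnn j) (hM1 j)))
  -- the real-valued entropy bound (in nats)
  have hL : (∑' t, G t * Real.log (G t)⁻¹) ≤ 1 + ∑ j, M j * Real.log (M j)⁻¹ := by
    have e1 : (∑' t, G t * Real.log (G t)⁻¹)
        = (∑' t, ENNReal.ofReal (G t * Real.log (G t)⁻¹)).toReal := by
      rw [ENNReal.tsum_toReal_eq (fun t => ENNReal.ofReal_ne_top)]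
      exact tsum_congr (fun t => (ENNReal.toReal_ofReal (hGterm t)).symm)
    have e2 := henn
    rw [← ENNReal.ofReal_sum_of_nonneg
      (fun j (_ : j ∈ univ) => add_nonneg (hMnn j) (hMterm j))] at e2
    rw [show ∑ j, (M j + M j * Real.log (M j)⁻¹) = 1 + ∑ j, M j * Real.log (M j)⁻¹ from by
      rw [Finset.sum_add_distrib, hMsum]] at e2
    rw [e1]
    calc (∑' t, ENNReal.ofReal (G t * Real.log (G t)⁻¹)).toReal
        ≤ (ENNReal.ofReal (1 + ∑ j, M j * Real.log (M j)⁻¹)).toReal :=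
          ENNReal.toReal_mono ENNReal.ofReal_ne_top e2
      _ = 1 + ∑ j, M j * Real.log (M j)⁻¹ :=
          ENNReal.toReal_ofReal
            (add_nonneg zero_le_one (Finset.sum_nonneg (fun j _ => hMterm j)))
  -- set up notation
  set x : ℝ := (z : ℝ) with hxdef
  have hx2 : (2:ℝ) ≤ x := by rw [hxdef]; exact_mod_cast hz
  have hx0 : 0 < x := by linarith
  have hx1 : 0 < x - 1 := by linarith
  set γ : ℝ := 1 / x with hγdef
  have hγ0 : 0 < γ := by rw [hγdef]; positivity
  have hγ1 : γ < 1 := by rw [hγdef, div_lt_one hx0]; linarith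
  have hgeo := gcaux_geom_tsum γ hγ0 hγ1
  have hlogb : ∀ y : ℝ, Real.logb 2 y = Real.log y * (Real.log 2)⁻¹ := fun y => by
    rw [Real.logb, div_eq_mul_inv]
  have eL : (∑' t : ℕ, G t * Real.logb 2 (G t)⁻¹)
      = (∑' t, G t * Real.log (G t)⁻¹) * (Real.log 2)⁻¹ := by
    rw [← tsum_mul_right]
    exact tsum_congr (fun t => by rw [hlogb]; ring)
  have eM : (∑ i, M i * Real.logb 2 (M i)⁻¹)
      = (∑ i, M i * Real.log (M i)⁻¹) * (Real.log 2)⁻¹ := by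
    rw [Finset.sum_mul]
    exact Finset.sum_congr rfl (fun i _ => by rw [hlogb]; ring)
  have eG : (∑' t : ℕ, (γ * (1 - γ) ^ t) * Real.logb 2 ((γ * (1 - γ) ^ t))⁻¹)
      = (Real.log γ⁻¹ + ((1-γ)/γ) * Real.log (1-γ)⁻¹) * (Real.log 2)⁻¹ := by
    rw [← hgeo, ← tsum_mul_right]
    exact tsum_congr (fun t => by rw [hlogb]; ring)
  have ez : Real.logb 2 (x - 1) = Real.log (x-1) * (Real.log 2)⁻¹ := hlogb _
  -- the numeric inequality
  have hnum : 1 ≤ Real.log γ⁻¹ + ((1-γ)/γ) * Real.log (1-γ)⁻¹ - Real.log (x-1) := by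
    have e1 : γ⁻¹ = x := by rw [hγdef, one_div, inv_inv]
    have e2 : (1-γ)/γ = x - 1 := by
      rw [hγdef]; field_simp
    have e3 : (1-γ)⁻¹ = x / (x-1) := by
      rw [hγdef, show 1 - 1/x = (x-1)/x from by field_simp, inv_div]
    have e4 : Real.log (x/(x-1)) = Real.log x - Real.log (x-1) :=
      Real.log_div (ne_of_gt hx0) (ne_of_gt hx1)
    rw [e1, e2, e3, e4]
    have h5 := gcaux_numeric x hx2
    have h6 : Real.log x + (x-1)*(Real.log x - Real.log (x-1)) - Real.log (x-1)
        = x * (Real.log x - Real.log (x-1)) := by ring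
    linarith
  rw [eL, eM, eG, ez]
  have hfinal : (∑' t, G t * Real.log (G t)⁻¹)
      ≤ (∑ i, M i * Real.log (M i)⁻¹)
        + (Real.log γ⁻¹ + ((1-γ)/γ) * Real.log (1-γ)⁻¹) - Real.log (x-1) := by
    linarith
  have hc : (0:ℝ) ≤ (Real.log 2)⁻¹ := inv_nonneg.mpr hlog2.le
  calc (∑' t, G t * Real.log (G t)⁻¹) * (Real.log 2)⁻¹
      ≤ ((∑ i, M i * Real.log (M i)⁻¹)
          + (Real.log γ⁻¹ + ((1-γ)/γ) * Real.log (1-γ)⁻¹) - Real.log (x-1)) * (Real.log 2)⁻¹ :=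
        mul_le_mul_of_nonneg_right hfinal hc
    _ = (∑ i, M i * Real.log (M i)⁻¹) * (Real.log 2)⁻¹
          + (Real.log γ⁻¹ + ((1-γ)/γ) * Real.log (1-γ)⁻¹) * (Real.log 2)⁻¹
          - Real.log (x-1) * (Real.log 2)⁻¹ := by ring
end

section
/- For every constant c < log₂(e) there exists a positive integer n such that every probability distribution C that couples MajorizingSet(U_n), where U_n is the uniform distribution on n states, satisfies H(C) > log₂(n) + c. Consequently, there is no algorithm A such that for all instances S the coupling A_S it outputs satisfies H(A_S) ≤ H(∧S) + c for some constant c < log₂(e). -/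
open Finset Real

/-- `q` is a member of `MajorizingSet p`: a sorted distribution on `n` states
whose prefix sums dominate those of `p` (i.e. `p ≼ q`). -/
def MajMem {n : ℕ} (p q : Fin n → ℝ) : Prop :=
  Antitone q ∧ (∀ k, 0 ≤ q k) ∧ (∑ k, q k = 1) ∧
    ∀ i : Fin n, ∑ j ∈ Finset.Iic i, p j ≤ ∑ j ∈ Finset.Iic i, q j

/-- The distribution `C` couples the distribution `q` on `n` states. -/
def Couples {n : ℕ} (C : ℕ → ℝ) (q : Fin n → ℝ) : Prop :=
  ∃ f : ℕ → Fin n, ∀ i : Fin n, ∑' j : {j : ℕ // f j = i}, C j.1 = q i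

/- Concavity of `x ↦ x * (-log x)`: tangent-line inequality at `a`, evaluated at `g`. -/
lemma concave_step {a g : ℝ} (ha : 0 < a) (hg : 0 < g) :
    g * (-Real.log g) + (-Real.log a - 1) * (a - g) ≤ a * (-Real.log a) := by
  have h2 : Real.log a - Real.log g ≤ a / g - 1 := by
    have := Real.log_le_sub_one_of_pos (div_pos ha hg)
    rwa [Real.log_div ha.ne' hg.ne'] at this
  have h3 : g * (Real.log a - Real.log g) ≤ a - g := by
    have h4 := mul_le_mul_of_nonneg_left h2 hg.le
    have h5 : g * (a / g - 1) = a - g := by field_simp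
    linarith
  nlinarith [h3]

/- limiting argument: if `a * cx ≤ T` for all `0 ≤ cx < m`, then `a * m ≤ T`. -/
lemma le_of_forall_mul_lt {a m T : ℝ} (ha : 0 < a) (hm : 0 ≤ m) (hT : 0 ≤ T)
    (h : ∀ cx, 0 ≤ cx → cx < m → a * cx ≤ T) : a * m ≤ T := by
  rcases eq_or_lt_of_le hm with h0 | h0
  · simp [← h0, hT]
  by_contra hlt
  push_neg at hlt
  have hTam : T / a < m := (div_lt_iff₀ ha).2 (by linarith [hlt])
  obtain ⟨cx, hcx1, hcx2⟩ := exists_between hTam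
  have hc0 : 0 ≤ cx := le_trans (div_nonneg hT ha.le) hcx1.le
  have := h cx hc0 hcx2
  have : T < a * cx := by
    have := (div_lt_iff₀' ha).1 hcx1
    linarith
  linarith [h cx hc0 hcx2]

lemma tail_rec (C : ℕ → ℝ) (hs : Summable C) (k : ℕ) :
    ∑' j, C (j + k) = C k + ∑' j, C (j + (k + 1)) := by
  have hsk : Summable (fun j => C (j + k)) := (summable_nat_add_iff k).2 hs
  rw [Summable.tsum_eq_zero_add hsk]
  congr 1
  · simp
  · exact tsum_congr fun b => by rw [show b + 1 + k = b + (k + 1) by omega]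

/- The main consequence of the coupling hypothesis:
for every `k` and every `0 ≤ cx ≤ 1/n` with `cx < C k`, we have
`(n - 1) * cx ≤ ∑_{j > k} C j`. -/
lemma coup_bound (n : ℕ) (hn : 3 ≤ n) (C : ℕ → ℝ) (hC : Antitone C)
    (h0 : ∀ j, 0 ≤ C j) (h1 : HasSum C 1)
    (hcpl : ∀ q : Fin n → ℝ, MajMem (fun _ => (1 / n : ℝ)) q → Couples C q)
    (k : ℕ) (cx : ℝ) (hc0 : 0 ≤ cx) (hcn : cx ≤ 1 / n) (hck : cx < C k) :
    ((n : ℝ) - 1) * cx ≤ ∑' j, C (j + (k + 1)) := by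
  have hn0 : (0 : ℝ) < n := by positivity
  have hnR : (3 : ℝ) ≤ n := by exact_mod_cast hn
  have hncx : (n : ℝ) * cx ≤ 1 := by
    calc (n : ℝ) * cx ≤ (n : ℝ) * (1 / n) := by
          exact mul_le_mul_of_nonneg_left hcn (le_of_lt hn0)
      _ = 1 := by field_simp
  haveI : NeZero n := ⟨by omega⟩
  set q : Fin n → ℝ := fun i => cx + (if i = 0 then 1 - n * cx else 0) with hqdef
  have hq0 : q 0 = cx + (1 - n * cx) := by simp [hqdef]
  have hmaj : MajMem (fun _ => (1 / n : ℝ)) q := by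
    refine ⟨?_, ?_, ?_, ?_⟩
    · intro i j hij
      by_cases hj : j = 0
      · have hi : i = 0 := by
          have : i ≤ (0 : Fin n) := hj ▸ hij
          exact le_antisymm this (Fin.zero_le _)
        simp [hqdef, hi, hj]
      · simp only [hqdef, hj, if_false]
        by_cases hi : i = 0
        · simp only [hi, if_true]
          linarith
        · simp [hi]
    · intro i
      simp only [hqdef]
      by_cases hi : i = 0 <;> simp [hi] <;> linarith
    · simp only [hqdef]
      rw [Finset.sum_add_distrib, Finset.sum_ite_eq' Finset.univ (0 : Fin n)]
      simp only [Finset.mem_univ, if_true, Finset.sum_const, Finset.card_univ,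
        Fintype.card_fin, nsmul_eq_mul]
      ring
    · intro i
      have h0mem : (0 : Fin n) ∈ Finset.Iic i := Finset.mem_Iic.2 (Fin.zero_le _)
      have hcard : ((Finset.Iic i).card : ℝ) ≤ n := by
        have h2 : (Finset.Iic i).card ≤ n := by
          simpa using Finset.card_le_univ (Finset.Iic i)
        exact_mod_cast h2
      have hcard0 : (0 : ℝ) ≤ ((Finset.Iic i).card : ℝ) := by positivity
      have hL : ∑ j ∈ Finset.Iic i, (1 / n : ℝ) = ((Finset.Iic i).card : ℝ) * (1 / n) := by
        rw [Finset.sum_const, nsmul_eq_mul]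
      have hR : ∑ j ∈ Finset.Iic i, q j
          = ((Finset.Iic i).card : ℝ) * cx + (1 - n * cx) := by
        simp only [hqdef]
        rw [Finset.sum_add_distrib, Finset.sum_ite_eq' (Finset.Iic i) (0 : Fin n)]
        simp [h0mem, Finset.sum_const, nsmul_eq_mul]
      rw [hL, hR]
      have hkey : ((Finset.Iic i).card : ℝ) * (cx - 1 / n) ≥ (n : ℝ) * (cx - 1 / n) := by
        apply mul_le_mul_of_nonpos_right hcard (by linarith)
      have : (n : ℝ) * (cx - 1 / n) = n * cx - 1 := by field_simp
      nlinarith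
  obtain ⟨f, hf⟩ := hcpl q hmaj
  -- every index `j ≤ k` is mapped to fiber 0
  have hfib : ∀ j, j ≤ k → f j = 0 := by
    intro j hj
    by_contra hne
    have hsub : Summable (fun m : {m : ℕ // f m = f j} => C m.1) :=
      h1.summable.subtype {m | f m = f j}
    have hle : C j ≤ q (f j) := by
      rw [← hf (f j)]
      exact Summable.le_tsum hsub ⟨j, rfl⟩ (fun m _ => h0 m.1)
    have : q (f j) = cx := by simp [hqdef, hne]
    have hCj : C k ≤ C j := hC hj
    rw [this] at hle
    linarith
  -- prefix sum bound
  have hSle : ∑ j ∈ Finset.range (k + 1), C j ≤ q 0 := by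
    rw [← hf 0]
    have hind : ∑ j ∈ Finset.range (k + 1), C j
        = ∑ j ∈ Finset.range (k + 1), Set.indicator {m | f m = 0} C j := by
      refine Finset.sum_congr rfl fun j hj => ?_
      exact (Set.indicator_of_mem
        (show j ∈ {m | f m = 0} from hfib j (by simpa [Nat.lt_succ_iff] using hj)) C).symm
    have h2 : ∑ j ∈ Finset.range (k + 1), Set.indicator {m | f m = 0} C j
        ≤ ∑' m, Set.indicator {m | f m = 0} C m :=
      Summable.sum_le_tsum _ (fun j _ => Set.indicator_apply_nonneg fun _ => h0 j)
        (h1.summable.indicator _)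
    have h3 : ∑' (j : {j : ℕ // f j = 0}), C j.1
        = ∑' m, Set.indicator {m | f m = 0} C m :=
      tsum_subtype ({m | f m = 0} : Set ℕ) C
    rw [hind]
    linarith
  have hsplit := Summable.sum_add_tsum_nat_add (f := C) (k + 1) h1.summable
  rw [h1.tsum_eq] at hsplit
  rw [hq0] at hSle
  linarith

/- Derived structural facts: bounds on atoms and geometric tail bound. -/
lemma struct_facts (n : ℕ) (hn : 3 ≤ n) (C : ℕ → ℝ) (hC : Antitone C)
    (h0 : ∀ j, 0 ≤ C j) (h1 : HasSum C 1)
    (hstep : ∀ (k : ℕ) (cx : ℝ), 0 ≤ cx → cx ≤ 1 / n → cx < C k →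
      ((n : ℝ) - 1) * cx ≤ ∑' j, C (j + (k + 1))) :
    (∀ j, C j ≤ 1 / n) ∧ (∀ k, (1 - 1 / (n : ℝ)) ^ k ≤ ∑' j, C (j + k)) ∧
      (∀ j, 0 < C j) := by
  have hn0 : (0 : ℝ) < n := by positivity
  have hnR : (3 : ℝ) ≤ n := by exact_mod_cast hn
  have hn1 : (1 : ℝ) < (n : ℝ) - 1 := by linarith
  set T : ℕ → ℝ := fun k => ∑' j, C (j + k) with hT
  have hTnn : ∀ k, 0 ≤ T k := fun k => tsum_nonneg (fun j => h0 _)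
  have hT0 : T 0 = 1 := by
    have : (fun j => C (j + 0)) = C := by funext j; simp
    simp only [hT, this, h1.tsum_eq]
  have hTrec : ∀ k, T k = C k + T (k + 1) := fun k => tail_rec C h1.summable k
  have hTS : ∀ k, ∑ j ∈ Finset.range k, C j + T k = 1 := by
    intro k
    have := Summable.sum_add_tsum_nat_add (f := C) k h1.summable
    rw [h1.tsum_eq] at this
    exact this
  have hT1 : ∀ k, T k ≤ 1 := by
    intro k
    have h3 := hTS k
    have : 0 ≤ ∑ j ∈ Finset.range k, C j := Finset.sum_nonneg fun j _ => h0 j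
    linarith
  -- C j ≤ 1/n
  have hCn : ∀ j, C j ≤ 1 / n := by
    intro j
    by_contra hgt
    push_neg at hgt
    have hbig : ((n : ℝ) - 1) * (1 / n) ≤ T (j + 1) := by
      apply le_of_forall_mul_lt (by linarith) (by positivity) (hTnn _)
      intro cx hc0 hcm
      exact hstep j cx hc0 hcm.le (lt_trans hcm hgt)
    have hSj : C j ≤ ∑ i ∈ Finset.range (j + 1), C i := by
      apply Finset.single_le_sum (fun i _ => h0 i)
      simp
    have h3 := hTS (j + 1)
    have h4 : ((n : ℝ) - 1) * (1 / n) = 1 - 1 / n := by field_simp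
    rw [h4] at hbig
    linarith
  -- tail recursion T (k+1) ≥ (1 - 1/n) T k
  have hTgeo : ∀ k, (1 - 1 / (n : ℝ)) * T k ≤ T (k + 1) := by
    intro k
    by_cases hk : C k ≤ T k / n
    · have := hTrec k
      have h5 : (1 - 1 / (n : ℝ)) * T k = T k - T k / n := by field_simp
      linarith
    · push_neg at hk
      have hCk0 : 0 < C k := lt_of_le_of_lt (div_nonneg (hTnn k) hn0.le) hk
      have hbig : ((n : ℝ) - 1) * (T k / n) ≤ T (k + 1) := by
        apply le_of_forall_mul_lt (by linarith) (div_nonneg (hTnn k) hn0.le) (hTnn _)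
        intro cx hc0 hcm
        apply hstep k cx hc0
        · have h7 : T k / n ≤ 1 / n := by gcongr; exact hT1 k
          linarith
        · calc cx < T k / n := hcm
            _ < C k := hk
      have h8 : ((n : ℝ) - 1) * (T k / n) = (1 - 1 / n) * T k := by
        field_simp
      linarith
  -- geometric tail bound
  have hTtail : ∀ k, (1 - 1 / (n : ℝ)) ^ k ≤ T k := by
    intro k
    induction k with
    | zero => simp [hT0]
    | succ k ih =>
      have hr0 : (0 : ℝ) ≤ 1 - 1 / n := by
        have : (1 : ℝ) / n ≤ 1 / 3 := by
          apply div_le_div_of_nonneg_left (by norm_num) (by norm_num) hnR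
        linarith
      calc (1 - 1 / (n : ℝ)) ^ (k + 1) = (1 - 1 / n) * (1 - 1 / n) ^ k := by ring
        _ ≤ (1 - 1 / n) * T k := mul_le_mul_of_nonneg_left ih hr0
        _ ≤ T (k + 1) := hTgeo k
  refine ⟨hCn, hTtail, ?_⟩
  intro j
  rcases lt_or_eq_of_le (h0 j) with h | h
  · exact h
  exfalso
  have hz : ∀ m, C (m + j) = 0 := by
    intro m
    have h9 : C (m + j) ≤ C j := hC (Nat.le_add_left j m)
    have := h0 (m + j)
    linarith [h.symm ▸ h9]
  have hTj : T j = 0 := by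
    simp only [hT]
    rw [tsum_congr hz]
    exact tsum_zero
  have hrpos : (0 : ℝ) < 1 - 1 / n := by
    have : (1 : ℝ) / n ≤ 1 / 3 := by
      apply div_le_div_of_nonneg_left (by norm_num) (by norm_num) hnR
    linarith
  have := hTtail j
  rw [hTj] at this
  exact absurd this (not_le.2 (pow_pos hrpos j))

/- Entropy lower bound: any antitone distribution with atoms `≤ 1/n` and
geometric tail bounds has (natural-log) entropy at least `log n + (1 - 1/n)`. -/
lemma entropy_lb (n : ℕ) (hn : 3 ≤ n) (C : ℕ → ℝ) (hC : Antitone C)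
    (hpos : ∀ j, 0 < C j) (hCn : ∀ j, C j ≤ 1 / n) (h1 : HasSum C 1)
    (htail : ∀ k, (1 - 1 / (n : ℝ)) ^ k ≤ ∑' j, C (j + k))
    (y : ℝ) (hy : HasSum (fun j => C j * (-Real.log (C j))) y) :
    Real.log n + (1 - 1 / n) ≤ y := by
  have hn0 : (0 : ℝ) < n := by positivity
  have hnR : (3 : ℝ) ≤ n := by exact_mod_cast hn
  have h13 : (1 : ℝ) / n ≤ 1 / 3 := by
    apply div_le_div_of_nonneg_left (by norm_num) (by norm_num) hnR
  set r : ℝ := 1 - 1 / n with hrdef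
  have hr0 : 0 < r := by rw [hrdef]; linarith
  have hr1 : r < 1 := by
    rw [hrdef]
    have : (0 : ℝ) < 1 / n := by positivity
    linarith
  have h1r : 1 - r = 1 / n := by rw [hrdef]; ring
  set T : ℕ → ℝ := fun k => ∑' j, C (j + k) with hTdef
  have hTnn : ∀ k, 0 ≤ T k := fun k => tsum_nonneg fun j => (hpos _).le
  have hT0 : T 0 = 1 := by
    have he : (fun j => C (j + 0)) = C := by funext j; simp
    simp only [hTdef, he, h1.tsum_eq]
  have hTrec : ∀ k, T k = C k + T (k + 1) := fun k => tail_rec C h1.summable k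
  set t : ℕ → ℝ := fun j => C j * (-Real.log (C j)) with htdef
  have hts : Summable t := hy.summable
  have hlog3 : (1 : ℝ) ≤ Real.log 3 := by
    rw [show (1 : ℝ) = Real.log (Real.exp 1) from (Real.log_exp 1).symm]
    exact Real.log_le_log (Real.exp_pos 1)
      (le_of_lt (lt_of_lt_of_le Real.exp_one_lt_d9 (by norm_num)))
  have hlogC : ∀ j, Real.log (C j) ≤ -1 := by
    intro j
    have h3 : Real.log (C j) ≤ Real.log ((1 : ℝ) / 3) :=
      Real.log_le_log (hpos j) (le_trans (hCn j) h13)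
    have h4 : Real.log ((1 : ℝ) / 3) = -Real.log 3 := by
      rw [one_div, Real.log_inv]
    linarith
  have htnn : ∀ j, 0 ≤ t j := by
    intro j
    exact mul_nonneg (hpos j).le (by linarith [hlogC j])
  have hparts : ∀ N, ∑ j ∈ Finset.range N, t j + ∑' j, t (j + N) = y := by
    intro N
    have := Summable.sum_add_tsum_nat_add (f := t) N hts
    rw [hy.tsum_eq] at this
    exact this
  set φ : ℕ → ℝ := fun j => -Real.log (C j) - 1 with hφdef
  have hφnn : ∀ j, 0 ≤ φ j := by intro j; simp only [hφdef]; linarith [hlogC j]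
  have hφmono : ∀ j, φ j ≤ φ (j + 1) := by
    intro j
    simp only [hφdef]
    have := Real.log_le_log (hpos (j + 1)) (hC (Nat.le_succ j))
    linarith
  set G : ℕ → ℝ := fun j => r ^ j / n with hGdef
  have hGpos : ∀ j, 0 < G j := fun j => div_pos (pow_pos hr0 j) hn0
  have hpowG : ∀ N, r ^ (N + 1) = r ^ N - G N := by
    intro N
    rw [pow_succ]
    simp only [hGdef, hrdef]
    field_simp
  -- main Abel-summation comparison
  have hB : ∀ N, (∑ j ∈ Finset.range N, G j * (-Real.log (G j))) + φ N * (r ^ N - T N)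
      ≤ ∑ j ∈ Finset.range N, t j := by
    intro N
    induction N with
    | zero => simp [hT0]
    | succ N ih =>
      have hconc := concave_step (hpos N) (hGpos N)
      have hΔ1 : r ^ (N + 1) - T (N + 1) ≤ 0 := by
        have := htail (N + 1)
        simp only [hTdef]
        linarith
      have e2 : φ (N + 1) * (r ^ (N + 1) - T (N + 1)) ≤ φ N * (r ^ (N + 1) - T (N + 1)) :=
        mul_le_mul_of_nonpos_right (hφmono N) hΔ1
      have e1 : r ^ (N + 1) - T (N + 1) = (r ^ N - T N) + (C N - G N) := by
        have h9 := hTrec N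
        have h10 := hpowG N
        linarith
      have e3 : φ N * (r ^ (N + 1) - T (N + 1))
          = φ N * (r ^ N - T N) + φ N * (C N - G N) := by rw [e1, mul_add]
      rw [Finset.sum_range_succ, Finset.sum_range_succ]
      have hconc' : G N * (-Real.log (G N)) + φ N * (C N - G N) ≤ t N := by
        simp only [hφdef, htdef]
        exact hconc
      linarith
  -- partial sums of the benchmark series are dominated by y
  set LB : ℕ → ℝ := fun j => Real.log n / n * r ^ j + 1 / ((n : ℝ) * n) * (j * r ^ j)
    with hLBdef
  have hpartial : ∀ N, ∑ j ∈ Finset.range N, LB j ≤ y := by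
    intro N
    have hFG : ∀ j, LB j ≤ G j * (-Real.log (G j)) := by
      intro j
      have hlogG : Real.log (G j) = j * Real.log r - Real.log n := by
        simp only [hGdef]
        rw [Real.log_div (pow_ne_zero j hr0.ne') hn0.ne', Real.log_pow]
      have hlr : Real.log r ≤ -(1 / n) := by
        have h := Real.log_le_sub_one_of_pos hr0
        have h2 : r - 1 = -(1 / (n : ℝ)) := by rw [hrdef]; ring
        exact h.trans (le_of_eq h2)
      have hineq : Real.log n + j / n ≤ -(Real.log (G j)) := by
        rw [hlogG]
        have hj0 : (0 : ℝ) ≤ (j : ℝ) := Nat.cast_nonneg j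
        have : (j : ℝ) * Real.log r ≤ (j : ℝ) * (-(1 / n)) :=
          mul_le_mul_of_nonneg_left hlr hj0
        have hjn : (j : ℝ) * (-(1 / n)) = -(j / n) := by ring
        linarith
      have hLBeq : LB j = (Real.log n + j / n) * G j := by
        simp only [hLBdef, hGdef]
        field_simp
      rw [hLBeq]
      calc (Real.log n + j / n) * G j ≤ (-(Real.log (G j))) * G j :=
            mul_le_mul_of_nonneg_right hineq (hGpos j).le
        _ = G j * (-Real.log (G j)) := by ring
    have hφT : φ N * T N ≤ ∑' j, t (j + N) := by
      have hsN : Summable fun j => C (j + N) := (summable_nat_add_iff N).2 h1.summable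
      have htN : Summable fun j => t (j + N) := (summable_nat_add_iff N).2 hts
      have h11 : ∀ j, -Real.log (C N) * C (j + N) ≤ t (j + N) := by
        intro j
        have hm : C (j + N) ≤ C N := hC (Nat.le_add_left N j)
        have hl : -Real.log (C N) ≤ -Real.log (C (j + N)) := by
          have := Real.log_le_log (hpos (j + N)) hm
          linarith
        calc -Real.log (C N) * C (j + N) ≤ -Real.log (C (j + N)) * C (j + N) :=
              mul_le_mul_of_nonneg_right hl (hpos _).le
          _ = t (j + N) := by simp only [htdef]; ring
      have h12 : -Real.log (C N) * T N = ∑' j, -Real.log (C N) * C (j + N) :=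
        (tsum_mul_left).symm
      have h13' : ∑' j, -Real.log (C N) * C (j + N) ≤ ∑' j, t (j + N) :=
        Summable.tsum_le_tsum h11 (hsN.mul_left _) htN
      have h14 : φ N ≤ -Real.log (C N) := by simp only [hφdef]; linarith
      calc φ N * T N ≤ -Real.log (C N) * T N :=
            mul_le_mul_of_nonneg_right h14 (hTnn N)
        _ = ∑' j, -Real.log (C N) * C (j + N) := h12
        _ ≤ ∑' j, t (j + N) := h13'
    have hsum1 : ∑ j ∈ Finset.range N, LB j ≤ ∑ j ∈ Finset.range N, G j * (-Real.log (G j)) :=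
      Finset.sum_le_sum fun j _ => hFG j
    have hBN := hB N
    have hpN := hparts N
    have hφr : 0 ≤ φ N * r ^ N := mul_nonneg (hφnn N) (pow_pos hr0 N).le
    have hmul : φ N * (r ^ N - T N) = φ N * r ^ N - φ N * T N := by ring
    linarith
  -- compute the limit of the benchmark series
  have hg1 : HasSum (fun j : ℕ => r ^ j) (1 - r)⁻¹ := hasSum_geometric_of_lt_one hr0.le hr1
  have hg2 : HasSum (fun j : ℕ => (j : ℝ) * r ^ j) (r / (1 - r) ^ 2) :=
    hasSum_coe_mul_geometric_of_norm_lt_one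
      (by rw [Real.norm_eq_abs, abs_of_pos hr0]; exact hr1)
  have hLBsum : HasSum LB (Real.log n / n * (1 - r)⁻¹ + 1 / ((n : ℝ) * n) * (r / (1 - r) ^ 2)) :=
    (hg1.mul_left (Real.log n / n)).add (hg2.mul_left (1 / ((n : ℝ) * n)))
  have hval : Real.log n / n * (1 - r)⁻¹ + 1 / ((n : ℝ) * n) * (r / (1 - r) ^ 2)
      = Real.log n + r := by
    rw [h1r]
    field_simp
  rw [hval] at hLBsum
  have hfin : Real.log n + r ≤ y := by
    rw [← hLBsum.tsum_eq]
    exact Summable.tsum_le_of_sum_range_le hLBsum.summable hpartial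
  rw [hrdef] at hfin
  exact hfin

/-- **Theorem 5 (tightness of the `log₂ e` gap).**
For every constant `c < log₂ e` there is an `n` such that every distribution `C`
coupling `MajorizingSet U_n` (with `U_n` uniform on `n` states, so
`H(∧ MajorizingSet U_n) = log₂ n`) has entropy `H(C) > log₂ n + c`.
(The entropy of `C` is expressed via `HasSum`; a `C` with divergent — i.e. infinite —
entropy satisfies the bound vacuously.)  Consequently no algorithm can guarantee
entropy at most `H(∧S) + c` for any constant `c < log₂ e`. -/
theorem no_better_than_log2e_additive_gap
    (c : ℝ) (hc : c < Real.logb 2 (Real.exp 1)) :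
    ∃ n : ℕ, 0 < n ∧
      ∀ C : ℕ → ℝ, Antitone C → (∀ j, 0 ≤ C j) → HasSum C 1 →
        (∀ q : Fin n → ℝ, MajMem (fun _ => (1 / n : ℝ)) q → Couples C q) →
        ∀ x : ℝ, HasSum (fun j => C j * Real.logb 2 (C j)⁻¹) x →
          Real.logb 2 n + c < x := by
  have hlog2 : (0 : ℝ) < Real.log 2 := Real.log_pos (by norm_num)
  have hcl : c * Real.log 2 < 1 := by
    have he : Real.logb 2 (Real.exp 1) = 1 / Real.log 2 := by
      rw [Real.logb, Real.log_exp]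
    rw [he] at hc
    calc c * Real.log 2 < 1 / Real.log 2 * Real.log 2 :=
          mul_lt_mul_of_pos_right hc hlog2
      _ = 1 := by field_simp
  set δ : ℝ := 1 - c * Real.log 2 with hδdef
  have hδ0 : 0 < δ := by rw [hδdef]; linarith
  set n : ℕ := max 3 ⌈(2 : ℝ) / δ⌉₊ with hndef
  have hn3 : 3 ≤ n := le_max_left _ _
  have hn0 : 0 < n := by omega
  have hnR : (3 : ℝ) ≤ n := by exact_mod_cast hn3
  have hn0R : (0 : ℝ) < n := by linarith
  have hnδ : (1 : ℝ) / n < δ := by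
    have h1 : (2 : ℝ) / δ ≤ (⌈(2 : ℝ) / δ⌉₊ : ℝ) := Nat.le_ceil _
    have h2 : ((⌈(2 : ℝ) / δ⌉₊ : ℕ) : ℝ) ≤ (n : ℝ) := by
      have := le_max_right 3 ⌈(2 : ℝ) / δ⌉₊
      rw [hndef]
      exact_mod_cast this
    have h3 : (2 : ℝ) / δ ≤ n := le_trans h1 h2
    rw [div_le_iff₀ hδ0] at h3
    have h4 : (1 : ℝ) / n ≤ δ / 2 := by
      rw [div_le_div_iff₀ hn0R (by norm_num)]
      linarith
    linarith
  refine ⟨n, hn0, ?_⟩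
  intro C hC h0 h1 hcpl x hx
  have hstep := coup_bound n hn3 C hC h0 h1 hcpl
  obtain ⟨hCn, htail, hpos⟩ := struct_facts n hn3 C hC h0 h1 hstep
  have hne2 : Real.log 2 ≠ 0 := hlog2.ne'
  have hteq : (fun j => C j * Real.logb 2 (C j)⁻¹ * Real.log 2)
      = fun j => C j * (-Real.log (C j)) := by
    funext j
    rw [Real.logb, Real.log_inv]
    field_simp
  have hy : HasSum (fun j => C j * (-Real.log (C j))) (x * Real.log 2) := by
    have := hx.mul_right (Real.log 2)
    rwa [hteq] at this
  have hmain := entropy_lb n hn3 C hC hpos hCn h1 htail _ hy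
  have hgoal : Real.log n + c * Real.log 2 < x * Real.log 2 := by
    have h5 : c * Real.log 2 < 1 - 1 / (n : ℝ) := by
      have : δ = 1 - c * Real.log 2 := hδdef
      linarith
    linarith
  have hlogb : Real.logb 2 (n : ℝ) = Real.log n / Real.log 2 := rfl
  rw [hlogb, div_add' _ _ _ hne2, div_lt_iff₀ hlog2]
  linarith
end

section
/- Let U_n be the uniform distribution on n states (each value 1/n), and let G′ be the sequence defined recursively by G′(i) = max_{1≤j≤n} (∑_{k=1}^{j} U_n(k) − ∑_{k=1}^{i−1} G′(k)) / j. Then for every i ≥ 1, G′(i) = (1/n)·(1−1/n)^{i−1}. -/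
open Finset Real

lemma aux_sup (n : ℕ) [NeZero n] (S : ℝ) (hS : 0 ≤ S) :
    (univ.sup' univ_nonempty fun j : Fin n =>
      ((∑ k ∈ Iic j, (1 / n : ℝ)) - S) / ((j : ℝ) + 1)) = (1 - S) / n := by
  have hn : (0:ℝ) < n := by
    exact_mod_cast Nat.pos_of_ne_zero (NeZero.ne n)
  have hterm : ∀ j : Fin n, ((∑ k ∈ Iic j, (1 / n : ℝ)) - S) / ((j : ℝ) + 1)
      = 1 / n - S / ((j : ℝ) + 1) := by
    intro j
    have hc : (Iic j).card = j + 1 := Fin.card_Iic j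
    rw [Finset.sum_const, hc]
    have hj : (0:ℝ) < (j : ℝ) + 1 := by positivity
    field_simp
    rw [nsmul_eq_mul, mul_sub, mul_left_comm, mul_one_div_cancel hn.ne']; push_cast; ring
  apply le_antisymm
  · apply Finset.sup'_le
    intro j _
    rw [hterm j]
    have h1 : (j : ℝ) + 1 ≤ n := by
      have := j.isLt
      exact_mod_cast Nat.succ_le_of_lt this
    have : S / n ≤ S / ((j : ℝ) + 1) :=
      div_le_div_of_nonneg_left hS (by positivity) h1
    have h2 : (1 - S) / n = 1 / n - S / n := by ring
    rw [h2]; linarith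
  · have hn' : 1 ≤ n := Nat.pos_of_ne_zero (NeZero.ne n)
    let j : Fin n := ⟨n - 1, by omega⟩
    have hcast : ((j : Fin n) : ℝ) + 1 = n := by
      show ((n - 1 : ℕ) : ℝ) + 1 = n
      rw [Nat.cast_sub hn']
      push_cast; ring
    calc (1 - S) / n = ((∑ k ∈ Iic j, (1 / n : ℝ)) - S) / ((j : ℝ) + 1) := by
          rw [hterm j, hcast]; ring
      _ ≤ _ := Finset.le_sup'
          (fun j : Fin n => ((∑ k ∈ Iic j, (1 / n : ℝ)) - S) / ((j : ℝ) + 1))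
          (Finset.mem_univ j)

/-- **Claim 7 (greedy on the majorizing set of the uniform distribution).**
Let `U_n` be the uniform distribution on `n` states and `G'` the sequence with
`G' i = max_{1≤j≤n} (∑_{k=1}^{j} U_n k − ∑_{k<i} G' k)/j`.  Then for every `i`
(0-indexed here, matching the paper's `i ≥ 1`), `G' i = (1/n)·(1−1/n)^i`. -/
theorem greedy_on_uniform_majorizing_set_geometric
    (n : ℕ) [NeZero n] (G' : ℕ → ℝ)
    (hG' : ∀ i, G' i = univ.sup' univ_nonempty fun j : Fin n =>
      ((∑ k ∈ Iic j, (1 / n : ℝ)) - ∑ k ∈ Finset.range i, G' k) / ((j : ℝ) + 1)) :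
    ∀ i : ℕ, G' i = (1 / n) * (1 - 1 / n) ^ i := by
  have hn : (0:ℝ) < n := by
    exact_mod_cast Nat.pos_of_ne_zero (NeZero.ne n)
  have hn1 : (1:ℝ)/n ≤ 1 := by
    rw [div_le_one hn]
    exact_mod_cast Nat.one_le_iff_ne_zero.mpr (NeZero.ne n)
  have hnn : (0:ℝ) ≤ 1/n := by positivity
  have key : ∀ i : ℕ, (∑ k ∈ Finset.range i, G' k = 1 - (1 - 1/n)^i) ∧
      G' i = (1 / n) * (1 - 1 / n) ^ i := by
    intro i
    induction i with
    | zero =>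
      constructor
      · simp
      · rw [hG' 0]
        simp only [Finset.range_zero, Finset.sum_empty]
        rw [aux_sup n 0 le_rfl]; simp
    | succ i ih =>
      have hsum : ∑ k ∈ Finset.range (i+1), G' k = 1 - (1 - 1/n)^(i+1) := by
        rw [Finset.sum_range_succ, ih.1, ih.2]
        ring
      refine ⟨hsum, ?_⟩
      have hS : (0:ℝ) ≤ 1 - (1 - 1/n)^(i+1) := by
        have := pow_le_one₀ (by linarith : (0:ℝ) ≤ 1 - 1/n) (by linarith : (1-1/n:ℝ) ≤ 1) (n := i+1)
        linarith
      rw [hG' (i+1), hsum, aux_sup n _ hS]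
      rw [sub_sub_cancel]
      ring
  exact fun i => (key i).2
end

section
/- For an integer n ≥ 2, the distribution g with g(i) = (1/n)·(1−1/n)^{i−1} for i = 1,2,… has entropy H(g) = log₂(n) + (n−1)·log₂(n/(n−1)), and lim_{n→∞} (n−1)·log₂(n/(n−1)) = log₂(e); hence H(g) − log₂(n) tends to log₂(e) as n → ∞. -/
open Filter Real

lemma entropy_formula_aux (n : ℕ) (hn : 2 ≤ n) :
    (∑' i : ℕ, ((1 / n : ℝ) * (1 - 1 / n) ^ i) *
        Real.logb 2 ((1 / (n : ℝ)) * (1 - 1 / n) ^ i)⁻¹) =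
      Real.logb 2 n + ((n : ℝ) - 1) * Real.logb 2 ((n : ℝ) / ((n : ℝ) - 1)) := by
  have hn1 : (1:ℝ) < n := by exact_mod_cast hn.trans_lt' one_lt_two
  have hn0 : (0:ℝ) < n := by linarith
  set p : ℝ := 1 / n with hp
  set q : ℝ := 1 - 1 / n with hq
  have hp0 : 0 < p := by positivity
  have hq0 : 0 < q := by
    rw [hq]
    have h : (1:ℝ)/n < 1 := by rw [div_lt_one hn0]; linarith
    linarith
  have hq1 : q < 1 := by
    rw [hq]
    have h : (0:ℝ) < 1/n := by positivity
    linarith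
  have hqe : q = ((n:ℝ) - 1) / n := by rw [hq]; field_simp
  have hA : ∀ i : ℕ, (p * q ^ i) * Real.logb 2 (p * q ^ i)⁻¹
      = Real.logb 2 n * (p * q ^ i) + Real.logb 2 ((n:ℝ)/((n:ℝ)-1)) * ((i : ℝ) * q ^ i * p) := by
    intro i
    have hqi : (0:ℝ) < q ^ i := by positivity
    have h1 : p⁻¹ = (n:ℝ) := by rw [hp]; field_simp
    have h2 : q⁻¹ = (n:ℝ)/((n:ℝ)-1) := by
      rw [hqe, inv_div]
    rw [mul_inv, Real.logb_mul (by positivity) (by positivity), ← inv_pow,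
      Real.logb_pow, h1, h2]
    ring
  rw [tsum_congr hA]
  have hs1 : Summable fun i : ℕ => q ^ i := summable_geometric_of_lt_one hq0.le hq1
  have hs2 : Summable fun i : ℕ => (i : ℝ) * q ^ i := by
    have := summable_pow_mul_geometric_of_norm_lt_one 1 (r := q)
      (by rw [Real.norm_eq_abs, abs_of_pos hq0]; exact hq1)
    simpa using this
  rw [Summable.tsum_add ((hs1.mul_left p).mul_left _) ((hs2.mul_right p).mul_left _),
    tsum_mul_left, tsum_mul_left, tsum_mul_left, tsum_mul_right,
    tsum_geometric_of_lt_one hq0.le hq1,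
    tsum_coe_mul_geometric_of_norm_lt_one (by rw [Real.norm_eq_abs, abs_of_pos hq0]; exact hq1)]
  have h1q : 1 - q = p := by rw [hq]; ring
  rw [h1q]
  have hpn : p * (1/p) = 1 := by field_simp
  have : q / p ^ 2 * p = q / p := by field_simp
  rw [inv_eq_one_div, hpn, mul_one, this]
  have : q / p = (n:ℝ) - 1 := by rw [hqe, hp]; field_simp
  rw [this]; ring

lemma limit_aux :
    Tendsto (fun n : ℕ => ((n : ℝ) - 1) * Real.logb 2 ((n : ℝ) / ((n : ℝ) - 1)))
      atTop (nhds (Real.logb 2 (Real.exp 1))) := by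
  have h0 : Tendsto (fun m : ℕ => ((1 : ℝ) + 1 / (m : ℝ)) ^ m) atTop (nhds (Real.exp 1)) :=
    Real.tendsto_one_add_div_pow_exp 1
  have hsub : Tendsto (fun n : ℕ => n - 1) atTop atTop :=
    tendsto_sub_atTop_nat 1
  have h1 : Tendsto (fun n : ℕ => ((1 : ℝ) + 1 / ((n - 1 : ℕ) : ℝ)) ^ (n - 1 : ℕ))
      atTop (nhds (Real.exp 1)) := h0.comp hsub
  have h2 : Tendsto (fun n : ℕ => Real.logb 2 (((1 : ℝ) + 1 / ((n - 1 : ℕ) : ℝ)) ^ (n - 1 : ℕ)))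
      atTop (nhds (Real.logb 2 (Real.exp 1))) := by
    simp only [Real.logb]
    exact (((Real.continuousAt_log (Real.exp_pos 1).ne').tendsto.comp h1).div_const _)
  refine h2.congr' ?_
  filter_upwards [eventually_ge_atTop 2] with n hn
  have hn1 : (1:ℝ) < n := by exact_mod_cast hn.trans_lt' one_lt_two
  have hcast : ((n - 1 : ℕ) : ℝ) = (n : ℝ) - 1 := by
    rw [Nat.cast_sub (by omega)]; simp
  rw [Real.logb_pow, hcast]
  have hne : (n:ℝ) - 1 ≠ 0 := by linarith
  have h : (1:ℝ) + 1/((n:ℝ)-1) = (n:ℝ)/((n:ℝ)-1) := by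
    field_simp
    ring
  rw [h]

/-- **Claim 7' (entropy of the geometric greedy coupling of the uniform majorizing set).**
For integer `n ≥ 2`, the distribution `g i = (1/n)(1−1/n)^{i}` (`i : ℕ`, 0-indexed) has
entropy `H(g) = log₂ n + (n−1)·log₂(n/(n−1))`; moreover
`(n−1)·log₂(n/(n−1)) → log₂ e` as `n → ∞`, hence `H(g) − log₂ n → log₂ e`. -/
theorem geometric_entropy_formula_and_limit :
    (∀ n : ℕ, 2 ≤ n →
      (∑' i : ℕ, ((1 / n : ℝ) * (1 - 1 / n) ^ i) *
          Real.logb 2 ((1 / (n : ℝ)) * (1 - 1 / n) ^ i)⁻¹) =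
        Real.logb 2 n + ((n : ℝ) - 1) * Real.logb 2 ((n : ℝ) / ((n : ℝ) - 1))) ∧
    Tendsto (fun n : ℕ => ((n : ℝ) - 1) * Real.logb 2 ((n : ℝ) / ((n : ℝ) - 1)))
      atTop (nhds (Real.logb 2 (Real.exp 1))) ∧
    Tendsto (fun n : ℕ =>
        (∑' i : ℕ, ((1 / n : ℝ) * (1 - 1 / n) ^ i) *
            Real.logb 2 ((1 / (n : ℝ)) * (1 - 1 / n) ^ i)⁻¹) - Real.logb 2 n)
      atTop (nhds (Real.logb 2 (Real.exp 1))) := by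
  refine ⟨entropy_formula_aux, limit_aux, ?_⟩
  refine limit_aux.congr' ?_
  filter_upwards [eventually_ge_atTop 2] with n hn
  rw [entropy_formula_aux n hn]; ring
end

section
/- Let S = {p₁,…,p_m} be a finite set of probability distributions, each on n states. Then there exists a distribution C that couples S (namely the greedy coupling) with H(C) ≤ H(∧S) + log₂(e); in particular, the minimum entropy coupling OPT_S of S satisfies H(OPT_S) ≤ H(∧S) + log₂(e). -/
open Finset Real

/-- `C` (a sorted countable distribution) is a coupling of the set of distributions
`p 0, …, p (m-1)` on `n` states: there are index maps `f ℓ` (the `ℓ`-th coordinates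
of the joint states) which jointly separate the states of `C` carrying positive mass,
such that the `ℓ`-th marginal is `p ℓ`. -/
def IsCouplingOf {m n : ℕ} (C : ℕ → ℝ) (p : Fin m → Fin n → ℝ) : Prop :=
  Antitone C ∧ (∀ j, 0 ≤ C j) ∧ HasSum C 1 ∧
  ∃ f : Fin m → ℕ → Fin n,
    (∀ j j' : ℕ, C j ≠ 0 → C j' ≠ 0 → (∀ ℓ, f ℓ j = f ℓ j') → j = j') ∧
    ∀ (ℓ : Fin m) (i : Fin n), ∑' jj : {j : ℕ // f ℓ j = i}, C jj.1 = p ℓ i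

/-- The entropy `H(C) = ∑ᵢ C i · log₂ (1 / C i)` of a countable distribution. -/
noncomputable def entC (C : ℕ → ℝ) : ℝ := ∑' j : ℕ, C j * Real.logb 2 (C j)⁻¹

set_option linter.unusedSectionVars false

namespace MECaux

variable {m n : ℕ} [NeZero m] [NeZero n]

noncomputable def amax (r : Fin n → ℝ) : Fin n :=
  (Finset.exists_max_image (univ : Finset (Fin n)) r univ_nonempty).choose

lemma le_amax (r : Fin n → ℝ) (i : Fin n) : r i ≤ r (amax r) := by
  have h := (Finset.exists_max_image (univ : Finset (Fin n)) r univ_nonempty).choose_spec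
  exact h.2 i (mem_univ i)

noncomputable def amin (g : Fin m → ℝ) : Fin m :=
  (Finset.exists_min_image (univ : Finset (Fin m)) g univ_nonempty).choose

lemma amin_le (g : Fin m → ℝ) (ℓ : Fin m) : g (amin g) ≤ g ℓ := by
  have h := (Finset.exists_min_image (univ : Finset (Fin m)) g univ_nonempty).choose_spec
  exact h.2 ℓ (mem_univ ℓ)

noncomputable def rowMax (r : Fin m → Fin n → ℝ) (ℓ : Fin m) : ℝ := r ℓ (amax (r ℓ))

noncomputable def atomOf (r : Fin m → Fin n → ℝ) : ℝ := rowMax r (amin (rowMax r))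

noncomputable def stepState (r : Fin m → Fin n → ℝ) : Fin m → Fin n → ℝ :=
  fun ℓ i => r ℓ i - if i = amax (r ℓ) then atomOf r else 0

variable (p : Fin m → Fin n → ℝ)

noncomputable def st : ℕ → Fin m → Fin n → ℝ
  | 0 => p
  | t + 1 => stepState (st t)

noncomputable def gC (t : ℕ) : ℝ := atomOf (st p t)

noncomputable def gf (ℓ : Fin m) (t : ℕ) : Fin n := amax (st p t ℓ)

lemma atomOf_le_rowMax (r : Fin m → Fin n → ℝ) (ℓ : Fin m) : atomOf r ≤ rowMax r ℓ :=
  amin_le _ ℓ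

variable (hpos : ∀ ℓ k, 0 ≤ p ℓ k) (hsum : ∀ ℓ, ∑ k, p ℓ k = 1)

section
include hpos

lemma st_nonneg : ∀ t ℓ i, 0 ≤ st p t ℓ i := by
  intro t
  induction t with
  | zero => exact hpos
  | succ t ih =>
    intro ℓ i
    show 0 ≤ st p t ℓ i - if i = amax (st p t ℓ) then atomOf (st p t) else 0
    rcases eq_or_ne i (amax (st p t ℓ)) with h | h
    · rw [h, if_pos rfl]
      have := atomOf_le_rowMax (st p t) ℓ
      rw [rowMax] at this
      linarith
    · rw [if_neg h]; simpa using ih ℓ i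

lemma gC_nonneg (t : ℕ) : 0 ≤ gC p t := st_nonneg p hpos t _ _

lemma st_succ_le (t : ℕ) (ℓ : Fin m) (i : Fin n) : st p (t+1) ℓ i ≤ st p t ℓ i := by
  show st p t ℓ i - _ ≤ st p t ℓ i
  have h0 : (0:ℝ) ≤ if i = amax (st p t ℓ) then atomOf (st p t) else 0 := by
    split
    · exact gC_nonneg p hpos t
    · exact le_refl 0
  show st p t ℓ i - _ ≤ st p t ℓ i
  linarith

lemma st_le_of_le {t t' : ℕ} (h : t ≤ t') (ℓ : Fin m) (i : Fin n) :
    st p t' ℓ i ≤ st p t ℓ i := by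
  induction t' with
  | zero => simp_all
  | succ t' ih =>
    rcases Nat.lt_or_ge t (t'+1) with hlt | hge
    · exact le_trans (st_succ_le p hpos t' ℓ i) (ih (Nat.lt_succ_iff.mp hlt))
    · have : t = t' + 1 := le_antisymm h hge
      simp [this]

end

lemma st_invariant : ∀ t ℓ i,
    st p t ℓ i + ∑ t' ∈ Finset.range t, (if gf p ℓ t' = i then gC p t' else 0) = p ℓ i := by
  intro t
  induction t with
  | zero => intro ℓ i; simp [st]
  | succ t ih =>
    intro ℓ i
    rw [Finset.sum_range_succ]
    have h1 : st p (t+1) ℓ i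
        = st p t ℓ i - (if gf p ℓ t = i then gC p t else 0) := by
      show st p t ℓ i - _ = _
      congr 1
      rw [gf, gC]
      by_cases h : i = amax (st p t ℓ)
      · rw [if_pos h, if_pos h.symm]
      · rw [if_neg h, if_neg (fun hh => h hh.symm)]
    rw [h1]
    have := ih ℓ i
    linarith

include hsum in
lemma row_sum (t : ℕ) (ℓ : Fin m) :
    (∑ i, st p t ℓ i) + ∑ t' ∈ Finset.range t, gC p t' = 1 := by
  have h : ∑ i, (st p t ℓ i + ∑ t' ∈ Finset.range t, (if gf p ℓ t' = i then gC p t' else 0))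
      = ∑ i, p ℓ i := by
    exact Finset.sum_congr rfl fun i _ => st_invariant p t ℓ i
  rw [Finset.sum_add_distrib, Finset.sum_comm] at h
  have h2 : ∀ t' ∈ Finset.range t,
      (∑ i, if gf p ℓ t' = i then gC p t' else 0) = gC p t' := by
    intro t' _
    simp
  rw [Finset.sum_congr rfl h2, hsum ℓ] at h
  exact h

end MECaux

namespace MECaux2
open MECaux

variable {m n : ℕ} [NeZero m] [NeZero n]
variable (p : Fin m → Fin n → ℝ)
variable (hpos : ∀ ℓ k, 0 ≤ p ℓ k) (hsum : ∀ ℓ, ∑ k, p ℓ k = 1)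

noncomputable def supp (t : ℕ) : Finset (Fin m × Fin n) :=
  univ.filter (fun q => st p t q.1 q.2 ≠ 0)

lemma st_zero_step (t : ℕ) (hall : ∀ ℓ i, st p t ℓ i = 0) : ∀ ℓ i, st p (t+1) ℓ i = 0 := by
  intro ℓ i
  show st p t ℓ i - _ = 0
  simp [atomOf, rowMax, hall]

include hpos

lemma supp_subset (t : ℕ) : supp p (t+1) ⊆ supp p t := by
  intro q hq
  simp only [supp, mem_filter, mem_univ, true_and] at hq ⊢
  intro h0
  have h1 := st_succ_le p hpos t q.1 q.2
  have h2 := st_nonneg p hpos (t+1) q.1 q.2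
  rw [h0] at h1
  exact hq (le_antisymm h1 h2)

include hsum

lemma gC_pos (t : ℕ) (hne : ∃ ℓ i, st p t ℓ i ≠ 0) : 0 < gC p t := by
  obtain ⟨ℓ₀, i₀, h0⟩ := hne
  have hp0 : 0 < st p t ℓ₀ i₀ := lt_of_le_of_ne (st_nonneg p hpos t ℓ₀ i₀) (Ne.symm h0)
  set ℓs := amin (rowMax (st p t)) with hls
  have hsum1 := row_sum p hsum t ℓ₀
  have hsum2 := row_sum p hsum t ℓs
  have hsum0 : 0 < ∑ i, st p t ℓ₀ i :=
    lt_of_lt_of_le hp0 (Finset.single_le_sum (fun i _ => st_nonneg p hpos t ℓ₀ i) (mem_univ i₀))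
  have hsums : 0 < ∑ i, st p t ℓs i := by linarith
  by_contra hle
  push_neg at hle
  have : ∀ i, st p t ℓs i = 0 := by
    intro i
    have h1 : st p t ℓs i ≤ rowMax (st p t) ℓs := le_amax _ i
    have h2 : rowMax (st p t) ℓs = gC p t := rfl
    exact le_antisymm (by linarith) (st_nonneg p hpos t ℓs i)
  rw [Finset.sum_congr rfl (fun i _ => this i)] at hsums
  simp at hsums

lemma supp_card_lt (t : ℕ) (hne : ∃ ℓ i, st p t ℓ i ≠ 0) :
    (supp p (t+1)).card < (supp p t).card := by
  set ℓs := amin (rowMax (st p t)) with hls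
  set is := amax (st p t ℓs) with his
  have hgc : 0 < gC p t := gC_pos p hpos hsum t hne
  have hin : (ℓs, is) ∈ supp p t := by
    simp only [supp, mem_filter, mem_univ, true_and]
    show st p t ℓs is ≠ 0
    have : st p t ℓs is = gC p t := rfl
    rw [this]; exact ne_of_gt hgc
  have hout : (ℓs, is) ∉ supp p (t+1) := by
    simp only [supp, mem_filter, mem_univ, true_and, not_not]
    show st p t ℓs is - _ = 0
    rw [if_pos rfl]
    show rowMax (st p t) ℓs - atomOf (st p t) = 0
    simp [atomOf, hls]
  apply Finset.card_lt_card
  exact ⟨supp_subset p hpos t, fun hsub => hout (hsub hin)⟩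

lemma supp_bound : ∀ t, (∃ ℓ i, st p t ℓ i ≠ 0) → (supp p t).card + t ≤ m * n := by
  intro t
  induction t with
  | zero =>
    intro _
    have : (supp p 0).card ≤ (univ : Finset (Fin m × Fin n)).card := Finset.card_le_card (Finset.filter_subset _ _)
    simpa [Finset.card_univ] using this
  | succ t ih =>
    intro hne
    have hnet : ∃ ℓ i, st p t ℓ i ≠ 0 := by
      by_contra hc
      push_neg at hc
      obtain ⟨ℓ, i, h⟩ := hne
      exact h (st_zero_step p t hc ℓ i)
    have h1 := ih hnet
    have h2 := supp_card_lt p hpos hsum t hnet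
    omega

lemma st_final : ∀ ℓ i, st p (m*n) ℓ i = 0 := by
  by_contra hc
  push_neg at hc
  obtain ⟨ℓ, i, h⟩ := hc
  have h1 := supp_bound p hpos hsum (m*n) ⟨ℓ, i, h⟩
  have h2 : (supp p (m*n)).card = 0 := by omega
  rw [Finset.card_eq_zero] at h2
  have : (ℓ, i) ∈ supp p (m*n) := by
    simp only [supp, mem_filter, mem_univ, true_and]
    exact h
  rw [h2] at this
  simp at this

lemma st_zero_ge : ∀ t, m*n ≤ t → ∀ ℓ i, st p t ℓ i = 0 := by
  intro t
  induction t with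
  | zero =>
    intro h ℓ i
    have : m * n = 0 := Nat.le_zero.mp h
    rw [← this]
    exact st_final p hpos hsum ℓ i
  | succ t ih =>
    intro h ℓ i
    rcases Nat.lt_or_ge t (m*n) with hlt | hge
    · have : m*n = t+1 := by omega
      rw [← this]
      exact st_final p hpos hsum ℓ i
    · exact st_zero_step p t (ih hge) ℓ i

lemma gC_zero_ge (t : ℕ) (h : m*n ≤ t) : gC p t = 0 := by
  show atomOf (st p t) = 0
  simp [atomOf, rowMax, st_zero_ge p hpos hsum t h]

lemma gC_sum_one : ∑ t ∈ Finset.range (m*n), gC p t = 1 := by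
  have ℓ0 : Fin m := ⟨0, Nat.pos_of_ne_zero (NeZero.ne m)⟩
  have h := row_sum p hsum (m*n) ℓ0
  rw [Finset.sum_congr rfl (fun i _ => st_final p hpos hsum ℓ0 i)] at h
  simpa using h

lemma marginal (ℓ : Fin m) (i : Fin n) :
    ∑ t' ∈ Finset.range (m*n), (if gf p ℓ t' = i then gC p t' else 0) = p ℓ i := by
  have h := st_invariant p (m*n) ℓ i
  rw [st_final p hpos hsum ℓ i] at h
  linarith

omit hsum in
lemma gC_antitone : Antitone (gC p) := by
  apply antitone_nat_of_succ_le
  intro t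
  set ℓs := amin (rowMax (st p t)) with hls
  calc gC p (t+1) ≤ rowMax (st p (t+1)) ℓs := atomOf_le_rowMax _ _
    _ ≤ rowMax (st p t) ℓs := by
        apply le_trans (st_succ_le p hpos t ℓs (amax (st p (t+1) ℓs)))
        exact le_amax _ _
    _ = gC p t := rfl

omit hsum in
lemma separation (t t' : ℕ) (h : t < t') (hne : gC p t' ≠ 0) :
    ∃ ℓ, gf p ℓ t ≠ gf p ℓ t' := by
  set ℓs := amin (rowMax (st p t)) with hls
  refine ⟨ℓs, fun heq => ?_⟩
  have h1 : st p (t+1) ℓs (gf p ℓs t) = 0 := by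
    show st p t ℓs (gf p ℓs t) - _ = 0
    rw [show gf p ℓs t = amax (st p t ℓs) from rfl, if_pos rfl]
    show rowMax (st p t) ℓs - atomOf (st p t) = 0
    simp [atomOf, hls]
  have h2 : st p t' ℓs (gf p ℓs t) = 0 := by
    have hle := st_le_of_le p hpos (Nat.succ_le_of_lt h) ℓs (gf p ℓs t)
    rw [h1] at hle
    exact le_antisymm hle (st_nonneg p hpos t' ℓs (gf p ℓs t))
  apply hne
  have h3 : gC p t' ≤ st p t' ℓs (gf p ℓs t') := atomOf_le_rowMax _ _
  rw [← heq, h2] at h3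
  exact le_antisymm h3 (gC_nonneg p hpos t')

end MECaux2

namespace MECaux3
open MECaux MECaux2

variable {m n : ℕ} [NeZero m] [NeZero n]
variable (p : Fin m → Fin n → ℝ)

/-- first-j entries of row ℓ -/
noncomputable def Ff (ℓ : Fin m) (j : ℕ) : ℝ :=
  ∑ i ∈ univ.filter (fun i : Fin n => i.val < j), p ℓ i

/-- prefix sums of the meet -/
noncomputable def Bb (j : ℕ) : ℝ := univ.inf' univ_nonempty (fun ℓ => Ff p ℓ j)

/-- entries of the meet, as a sequence on ℕ -/
noncomputable def Mm (a : ℕ) : ℝ := Bb p (a+1) - Bb p a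

/-- entries of p with ℕ index -/
noncomputable def pn (ℓ : Fin m) (j : ℕ) : ℝ := if h : j < n then p ℓ ⟨j, h⟩ else 0

variable (hsort : ∀ ℓ, Antitone (p ℓ)) (hpos : ∀ ℓ k, 0 ≤ p ℓ k) (hsum : ∀ ℓ, ∑ k, p ℓ k = 1)

lemma filt_succ (j : ℕ) (h : j < n) :
    (univ.filter (fun i : Fin n => i.val < j + 1))
      = insert ⟨j, h⟩ (univ.filter (fun i : Fin n => i.val < j)) := by
  ext i
  simp only [mem_filter, mem_univ, true_and, mem_insert]
  constructor
  · intro hi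
    rcases Nat.lt_or_ge i.val j with h1 | h1
    · exact Or.inr h1
    · left; apply Fin.ext; simp only [Fin.val_mk]; omega
  · rintro (rfl | hi)
    · simp
    · omega

lemma filt_full (j : ℕ) (h : n ≤ j) :
    (univ.filter (fun i : Fin n => i.val < j)) = univ := by
  ext i
  simp only [mem_filter, mem_univ, true_and, iff_true]
  exact lt_of_lt_of_le i.isLt h

lemma filt_card (j : ℕ) (h : j ≤ n) :
    (univ.filter (fun i : Fin n => i.val < j)).card = j := by
  induction j with
  | zero => simp
  | succ j ih =>
    rw [filt_succ j (lt_of_lt_of_le (Nat.lt_succ_self j) h)]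
    rw [Finset.card_insert_of_notMem (by simp)]
    rw [ih (le_of_lt (Nat.lt_of_succ_le h))]

lemma Ff_succ (ℓ : Fin m) (j : ℕ) : Ff p ℓ (j+1) = Ff p ℓ j + pn p ℓ j := by
  rcases Nat.lt_or_ge j n with h | h
  · rw [Ff, filt_succ j h, Finset.sum_insert (by simp), Ff, pn, dif_pos h]
    ring
  · rw [Ff, Ff, filt_full (j+1) (le_trans h (Nat.le_succ j)), filt_full j h, pn, dif_neg (by omega)]
    ring

include hpos in
lemma pn_nonneg (ℓ : Fin m) (j : ℕ) : 0 ≤ pn p ℓ j := by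
  rw [pn]; split
  · exact hpos ℓ _
  · exact le_refl 0

include hsort hpos in
lemma pn_antitone (ℓ : Fin m) (j : ℕ) : pn p ℓ (j+1) ≤ pn p ℓ j := by
  rw [pn, pn]
  split
  · rename_i h1
    rw [dif_pos (by omega)]
    exact hsort ℓ (by exact Fin.mk_le_mk.mpr (Nat.le_succ j))
  · split
    · exact hpos ℓ _
    · exact le_refl 0

lemma Bb_le_Ff (j : ℕ) (ℓ : Fin m) : Bb p j ≤ Ff p ℓ j :=
  Finset.inf'_le _ (mem_univ ℓ)

lemma Bb_exists (j : ℕ) : ∃ ℓ, Bb p j = Ff p ℓ j := by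
  obtain ⟨ℓ, _, h⟩ := Finset.exists_mem_eq_inf' (univ_nonempty) (fun ℓ => Ff p ℓ j)
  exact ⟨ℓ, h⟩

lemma Bb_zero : Bb p 0 = 0 := by
  have : ∀ ℓ : Fin m, Ff p ℓ 0 = 0 := by
    intro ℓ; rw [Ff]
    apply Finset.sum_eq_zero
    intro i hi
    simp at hi
  rw [Bb]
  rw [show (fun ℓ => Ff p ℓ 0) = (fun _ => (0:ℝ)) from funext this]
  exact Finset.inf'_const _ _

include hsum in
lemma Bb_full (j : ℕ) (h : n ≤ j) : Bb p j = 1 := by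
  have : ∀ ℓ : Fin m, Ff p ℓ j = 1 := by
    intro ℓ; rw [Ff, filt_full j h]; exact hsum ℓ
  rw [Bb, show (fun ℓ => Ff p ℓ j) = (fun _ => (1:ℝ)) from funext this]
  exact Finset.inf'_const _ _

include hpos in
lemma Ff_nonneg (ℓ : Fin m) (j : ℕ) : 0 ≤ Ff p ℓ j :=
  Finset.sum_nonneg (fun i _ => hpos ℓ i)

include hpos hsum in
lemma Ff_le_one (ℓ : Fin m) (j : ℕ) : Ff p ℓ j ≤ 1 := by
  rw [← hsum ℓ]
  exact Finset.sum_le_sum_of_subset_of_nonneg (Finset.filter_subset _ _)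
    (fun i _ _ => hpos ℓ i)

include hpos in
lemma Mm_nonneg (a : ℕ) : 0 ≤ Mm p a := by
  obtain ⟨ℓ, hℓ⟩ := Bb_exists p (a+1)
  have h1 : Ff p ℓ a ≤ Ff p ℓ (a+1) := by
    rw [Ff_succ]
    have := pn_nonneg p hpos ℓ a
    linarith
  have h2 := Bb_le_Ff p a ℓ
  rw [Mm, hℓ]
  linarith

include hsort hpos in
lemma Mm_antitone_succ (a : ℕ) : Mm p (a+1) ≤ Mm p a := by
  obtain ⟨ℓ, hℓ⟩ := Bb_exists p (a+1)
  have h1 : Bb p (a+2) ≤ Ff p ℓ (a+2) := Bb_le_Ff p _ ℓ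
  have h2 : Bb p a ≤ Ff p ℓ a := Bb_le_Ff p a ℓ
  have h3 : Ff p ℓ (a+2) = Ff p ℓ (a+1) + pn p ℓ (a+1) := Ff_succ p ℓ (a+1)
  have h4 : Ff p ℓ (a+1) = Ff p ℓ a + pn p ℓ a := Ff_succ p ℓ a
  have h5 := pn_antitone p hsort hpos ℓ a
  rw [Mm, Mm, hℓ]
  linarith

include hsort hpos in
lemma Mm_antitone {a b : ℕ} (h : a ≤ b) : Mm p b ≤ Mm p a := by
  induction b with
  | zero => simp_all
  | succ b ih =>
    rcases Nat.lt_or_ge a (b+1) with h1 | h1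
    · exact le_trans (Mm_antitone_succ p hsort hpos b) (ih (Nat.lt_succ_iff.mp h1))
    · have : a = b+1 := le_antisymm h h1
      rw [this]

lemma Mm_sum (j : ℕ) : ∑ a ∈ Finset.range j, Mm p a = Bb p j := by
  induction j with
  | zero => simp [Bb_zero]
  | succ j ih => rw [Finset.sum_range_succ, ih, Mm]; ring

include hpos in
lemma Bb_nonneg (j : ℕ) : 0 ≤ Bb p j := by
  obtain ⟨ℓ, hℓ⟩ := Bb_exists p j
  rw [hℓ]; exact Ff_nonneg p hpos ℓ j

include hpos hsum in
lemma Bb_le_one (j : ℕ) : Bb p j ≤ 1 := by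
  obtain ⟨ℓ, hℓ⟩ := Bb_exists p j
  rw [hℓ]; exact Ff_le_one p hpos hsum ℓ j

include hpos hsum in
lemma Mm_le_one (a : ℕ) : Mm p a ≤ 1 := by
  have h1 := Bb_le_one p hpos hsum (a+1)
  have h2 := Bb_nonneg p hpos a
  rw [Mm]; linarith

include hpos in
/-- the key structural inequality of the greedy coupling -/
lemma diamond (k j : ℕ) (hj : j ≤ n) :
    Bb p j ≤ (∑ t ∈ Finset.range k, gC p t) + j * gC p k := by
  set ℓs := amin (rowMax (st p k)) with hls
  have h1 : ∀ i, st p k ℓs i ≤ gC p k := fun i => le_amax _ i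
  have hrem : ∀ i : Fin n, (0:ℝ) ≤ ∑ t ∈ Finset.range k, (if gf p ℓs t = i then gC p t else 0) := by
    intro i
    apply Finset.sum_nonneg
    intro t _
    split
    · exact gC_nonneg p hpos t
    · exact le_refl 0
  have hchain : Ff p ℓs j ≤ j * gC p k + ∑ t ∈ Finset.range k, gC p t := by
    have hFf : Ff p ℓs j = (∑ i ∈ univ.filter (fun i : Fin n => i.val < j), st p k ℓs i)
        + ∑ i ∈ univ.filter (fun i : Fin n => i.val < j),
            (∑ t ∈ Finset.range k, (if gf p ℓs t = i then gC p t else 0)) := by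
      rw [Ff, ← Finset.sum_add_distrib]
      exact Finset.sum_congr rfl (fun i _ => (st_invariant p k ℓs i).symm)
    have hb1 : (∑ i ∈ univ.filter (fun i : Fin n => i.val < j), st p k ℓs i)
        ≤ j * gC p k := by
      calc (∑ i ∈ univ.filter (fun i : Fin n => i.val < j), st p k ℓs i)
          ≤ ∑ _i ∈ univ.filter (fun i : Fin n => i.val < j), gC p k :=
            Finset.sum_le_sum (fun i _ => h1 i)
        _ = j * gC p k := by rw [Finset.sum_const, filt_card j hj, nsmul_eq_mul]
    have hb2 : (∑ i ∈ univ.filter (fun i : Fin n => i.val < j),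
            (∑ t ∈ Finset.range k, (if gf p ℓs t = i then gC p t else 0)))
        ≤ ∑ t ∈ Finset.range k, gC p t := by
      calc (∑ i ∈ univ.filter (fun i : Fin n => i.val < j),
            (∑ t ∈ Finset.range k, (if gf p ℓs t = i then gC p t else 0)))
          ≤ ∑ i : Fin n, (∑ t ∈ Finset.range k, (if gf p ℓs t = i then gC p t else 0)) :=
            Finset.sum_le_sum_of_subset_of_nonneg (Finset.filter_subset _ _)
              (fun i _ _ => hrem i)
        _ = ∑ t ∈ Finset.range k, gC p t := by
            rw [Finset.sum_comm]
            exact Finset.sum_congr rfl (fun t _ => by simp)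
    linarith
  have := Bb_le_Ff p j ℓs
  linarith

end MECaux3

namespace MECaux4
open MECaux MECaux2 MECaux3
open scoped Classical

lemma downclosed_eq_range (T : Finset ℕ) (h : ∀ x ∈ T, ∀ y, y ≤ x → y ∈ T) :
    T = Finset.range T.card := by
  rcases T.eq_empty_or_nonempty with rfl | hne
  · simp
  · have hT : T = Finset.range (T.max' hne + 1) := by
      ext x
      simp only [Finset.mem_range]
      constructor
      · intro hx; exact Nat.lt_succ_of_le (Finset.le_max' T x hx)
      · intro hx; exact h _ (T.max'_mem hne) x (Nat.lt_succ_iff.mp hx)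
    have hc : T.card = T.max' hne + 1 := by
      conv_lhs => rw [hT]
      exact Finset.card_range _
    calc T = Finset.range (T.max' hne + 1) := hT
      _ = Finset.range T.card := by rw [hc]

variable {m n : ℕ} [NeZero m] [NeZero n]
variable (p : Fin m → Fin n → ℝ)
variable (hsort : ∀ ℓ, Antitone (p ℓ)) (hpos : ∀ ℓ k, 0 ≤ p ℓ k) (hsum : ∀ ℓ, ∑ k, p ℓ k = 1)

include hpos hsum in
lemma gC_le_one (t : ℕ) : gC p t ≤ 1 := by
  set ℓs := amin (rowMax (st p t)) with hls
  have h1 : gC p t = st p t ℓs (amax (st p t ℓs)) := rfl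
  have h2 : st p t ℓs (amax (st p t ℓs)) ≤ ∑ i, st p t ℓs i :=
    Finset.single_le_sum (fun i _ => st_nonneg p hpos t ℓs i) (mem_univ _)
  have h3 := row_sum p hsum t ℓs
  have h4 : 0 ≤ ∑ t' ∈ Finset.range t, gC p t' :=
    Finset.sum_nonneg (fun t' _ => gC_nonneg p hpos t')
  linarith

include hsort hpos hsum in
lemma key (ε : ℝ) (hε : 0 < ε) :
    ∑ t ∈ Finset.range (m*n), (if gC p t < ε then gC p t else 0)
      ≤ (∑ a ∈ Finset.range n, (if Mm p a < ε then Mm p a else 0))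
        + ∑ a ∈ Finset.range n, (if ε ≤ Mm p a then ε else 0) := by
  set TC := (Finset.range (m*n)).filter (fun t => ε ≤ gC p t) with hTCdef
  have hTCdc : ∀ x ∈ TC, ∀ y, y ≤ x → y ∈ TC := by
    intro x hx y hyx
    rw [hTCdef, mem_filter, Finset.mem_range] at hx ⊢
    exact ⟨by omega, le_trans hx.2 (gC_antitone p hpos hyx)⟩
  have hTC : TC = Finset.range TC.card := downclosed_eq_range TC hTCdc
  set κ := TC.card with hκdef
  have hκ : κ ≤ m*n := by
    calc κ ≤ (Finset.range (m*n)).card := Finset.card_filter_le _ _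
      _ = m*n := Finset.card_range _
  have hCκ : gC p κ < ε := by
    rcases eq_or_lt_of_le hκ with heq | hlt
    · rw [heq]
      rw [gC_zero_ge p hpos hsum (m*n) (le_refl _)]
      exact hε
    · have : κ ∉ TC := by rw [hTC]; exact fun hc => absurd (Finset.mem_range.mp hc) (lt_irrefl κ)
      rw [hTCdef, mem_filter] at this
      push_neg at this
      exact this (Finset.mem_range.mpr hlt)
  have hsplitC : ∑ t ∈ Finset.range (m*n), (if gC p t < ε then gC p t else 0)
      = 1 - ∑ t ∈ Finset.range κ, gC p t := by
    have h1 : ∀ t, (if ε ≤ gC p t then gC p t else 0) + (if gC p t < ε then gC p t else 0)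
        = gC p t := by
      intro t
      rcases le_or_gt ε (gC p t) with h | h
      · rw [if_pos h, if_neg (not_lt.mpr h)]; ring
      · rw [if_neg (not_le.mpr h), if_pos h]; ring
    have h2 : ∑ t ∈ Finset.range (m*n),
        ((if ε ≤ gC p t then gC p t else 0) + (if gC p t < ε then gC p t else 0)) = 1 := by
      rw [Finset.sum_congr rfl (fun t _ => h1 t)]
      exact gC_sum_one p hpos hsum
    rw [Finset.sum_add_distrib] at h2
    have h3 : ∑ t ∈ Finset.range (m*n), (if ε ≤ gC p t then gC p t else 0)
        = ∑ t ∈ Finset.range κ, gC p t := by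
      rw [← Finset.sum_filter, ← hTCdef, hTC]
    rw [h3] at h2
    linarith
  set Mσ := (Finset.range n).filter (fun a => ε ≤ Mm p a) with hMσdef
  have hMσdc : ∀ x ∈ Mσ, ∀ y, y ≤ x → y ∈ Mσ := by
    intro x hx y hyx
    rw [hMσdef, mem_filter, Finset.mem_range] at hx ⊢
    exact ⟨by omega, le_trans hx.2 (Mm_antitone p hsort hpos hyx)⟩
  have hMσ : Mσ = Finset.range Mσ.card := downclosed_eq_range Mσ hMσdc
  set js := Mσ.card with hjsdef
  have hjs : js ≤ n := by
    calc js ≤ (Finset.range n).card := Finset.card_filter_le _ _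
      _ = n := Finset.card_range _
  have hsplitM : ∑ a ∈ Finset.range n, (if Mm p a < ε then Mm p a else 0)
      = 1 - Bb p js := by
    have h1 : ∀ a, (if ε ≤ Mm p a then Mm p a else 0) + (if Mm p a < ε then Mm p a else 0)
        = Mm p a := by
      intro a
      rcases le_or_gt ε (Mm p a) with h | h
      · rw [if_pos h, if_neg (not_lt.mpr h)]; ring
      · rw [if_neg (not_le.mpr h), if_pos h]; ring
    have h2 : ∑ a ∈ Finset.range n,
        ((if ε ≤ Mm p a then Mm p a else 0) + (if Mm p a < ε then Mm p a else 0)) = 1 := by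
      rw [Finset.sum_congr rfl (fun a _ => h1 a), Mm_sum, Bb_full p hsum n (le_refl n)]
    rw [Finset.sum_add_distrib] at h2
    have h3 : ∑ a ∈ Finset.range n, (if ε ≤ Mm p a then Mm p a else 0)
        = Bb p js := by
      rw [← Finset.sum_filter, ← hMσdef, hMσ, Mm_sum]
    rw [h3] at h2
    linarith
  have hεsum : ∑ a ∈ Finset.range n, (if ε ≤ Mm p a then ε else 0) = (js : ℝ) * ε := by
    rw [← Finset.sum_filter, ← hMσdef, Finset.sum_const, hjsdef, nsmul_eq_mul]
  have hdia := diamond p hpos κ js hjs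
  have hmul : (js : ℝ) * gC p κ ≤ (js : ℝ) * ε :=
    mul_le_mul_of_nonneg_left (le_of_lt hCκ) (Nat.cast_nonneg js)
  rw [hsplitC, hsplitM, hεsum]
  linarith

end MECaux4

namespace MECint
open Real Set MeasureTheory

lemma expInt : IntegrableOn (fun s : ℝ => Real.exp (-s)) (Ioi 0) := by
  have := exp_neg_integrableOn_Ioi (0:ℝ) (b := 1) one_pos
  simpa using this

lemma g1_meas (x : ℝ) : Measurable (fun s : ℝ => if x < Real.exp (-s) then x else 0) := by
  apply Measurable.ite _ measurable_const measurable_const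
  have : {s : ℝ | x < Real.exp (-s)} = (fun s : ℝ => Real.exp (-s)) ⁻¹' (Set.Ioi x) := rfl
  rw [this]
  exact (Real.measurable_exp.comp measurable_neg) measurableSet_Ioi

lemma g1_le (x : ℝ) (hx : 0 ≤ x) (s : ℝ) :
    ‖if x < Real.exp (-s) then x else 0‖ ≤ Real.exp (-s) := by
  split
  · rw [Real.norm_eq_abs, abs_of_nonneg hx]
    next h => exact le_of_lt h
  · simp [Real.exp_nonneg]

lemma g1_integrable (x : ℝ) (hx : 0 ≤ x) :
    IntegrableOn (fun s : ℝ => if x < Real.exp (-s) then x else 0) (Ioi 0) := by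
  apply Integrable.mono' expInt ((g1_meas x).aestronglyMeasurable.restrict)
  exact MeasureTheory.ae_of_all _ (g1_le x hx)

lemma g2_meas (x : ℝ) :
    Measurable (fun s : ℝ => if Real.exp (-s) ≤ x then Real.exp (-s) else 0) := by
  apply Measurable.ite _ (Real.measurable_exp.comp measurable_neg) measurable_const
  have : {s : ℝ | Real.exp (-s) ≤ x} = (fun s : ℝ => Real.exp (-s)) ⁻¹' (Set.Iic x) := rfl
  rw [this]
  exact (Real.measurable_exp.comp measurable_neg) measurableSet_Iic

lemma g2_le (x s : ℝ) : ‖if Real.exp (-s) ≤ x then Real.exp (-s) else 0‖ ≤ Real.exp (-s) := by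
  split
  · rw [Real.norm_eq_abs, abs_of_nonneg (le_of_lt (Real.exp_pos _))]
  · simp [Real.exp_nonneg]

lemma g2_integrable (x : ℝ) :
    IntegrableOn (fun s : ℝ => if Real.exp (-s) ≤ x then Real.exp (-s) else 0) (Ioi 0) := by
  apply Integrable.mono' expInt ((g2_meas x).aestronglyMeasurable.restrict)
  exact MeasureTheory.ae_of_all _ (g2_le x)

lemma g1_integral (x : ℝ) (hx0 : 0 ≤ x) (hx1 : x ≤ 1) :
    ∫ s in Ioi (0:ℝ), (if x < Real.exp (-s) then x else 0) = x * Real.log x⁻¹ := by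
  rcases eq_or_lt_of_le hx0 with rfl | hx
  · simp
  · have hfun : (fun s : ℝ => if x < Real.exp (-s) then x else 0)
        = Set.indicator (Iio (-Real.log x)) (fun _ => x) := by
      funext s
      have hiff : x < Real.exp (-s) ↔ s < -Real.log x := by
        rw [← Real.log_lt_iff_lt_exp hx]
        constructor <;> intro h <;> linarith
      rw [Set.indicator_apply]
      by_cases h : x < Real.exp (-s)
      · rw [if_pos h, if_pos (by exact hiff.mp h)]
      · rw [if_neg h, if_neg (by exact fun hc => h (hiff.mpr hc))]
    rw [hfun, MeasureTheory.integral_indicator measurableSet_Iio]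
    rw [Measure.restrict_restrict measurableSet_Iio]
    have hint : Iio (-Real.log x) ∩ Ioi 0 = Ioo 0 (-Real.log x) := by
      ext s; simp only [Set.mem_inter_iff, Set.mem_Iio, Set.mem_Ioi, Set.mem_Ioo]; tauto
    rw [hint, MeasureTheory.setIntegral_const, Real.volume_real_Ioo, smul_eq_mul]
    have hlog : 0 ≤ -Real.log x := by
      have := Real.log_nonpos (le_of_lt hx) hx1
      linarith
    rw [max_eq_left (by linarith)]
    rw [Real.log_inv]
    ring

lemma g2_integral (x : ℝ) (hx0 : 0 ≤ x) (hx1 : x ≤ 1) :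
    ∫ s in Ioi (0:ℝ), (if Real.exp (-s) ≤ x then Real.exp (-s) else 0) = x := by
  rcases eq_or_lt_of_le hx0 with rfl | hx
  · simp [not_le.mpr (Real.exp_pos _)]
  · have hfun : (fun s : ℝ => if Real.exp (-s) ≤ x then Real.exp (-s) else 0)
        = Set.indicator (Ici (-Real.log x)) (fun s => Real.exp (-s)) := by
      funext s
      have hiff : Real.exp (-s) ≤ x ↔ -Real.log x ≤ s := by
        rw [← Real.exp_log hx, Real.exp_le_exp, Real.exp_log hx]
        constructor <;> intro h <;> linarith
      rw [Set.indicator_apply]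
      by_cases h : Real.exp (-s) ≤ x
      · rw [if_pos h, if_pos (by exact hiff.mp h)]
      · rw [if_neg h, if_neg (by exact fun hc => h (hiff.mpr hc))]
    rw [hfun, MeasureTheory.integral_indicator measurableSet_Ici]
    rw [Measure.restrict_restrict measurableSet_Ici]
    have hlog : 0 ≤ -Real.log x := by
      have := Real.log_nonpos (le_of_lt hx) hx1
      linarith
    have hint : (Set.Ici (-Real.log x) ∩ Set.Ioi 0 : Set ℝ) =ᵐ[volume] Set.Ioi (-Real.log x) := by
      rcases eq_or_lt_of_le hlog with heq | hlt
      · have h2 : Set.Ici (-Real.log x) ∩ Set.Ioi 0 = Set.Ioi (0:ℝ) := by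
          rw [← heq]
          ext s; simp only [Set.mem_inter_iff, Set.mem_Ici, Set.mem_Ioi]; constructor
          · exact fun h => h.2
          · exact fun h => ⟨le_of_lt h, h⟩
        rw [h2, ← heq]; exact Filter.EventuallyEq.rfl
      · have h2 : Set.Ici (-Real.log x) ∩ Set.Ioi 0 = Set.Ici (-Real.log x) := by
          ext s; simp only [Set.mem_inter_iff, Set.mem_Ici, Set.mem_Ioi]; constructor
          · exact fun h => h.1
          · exact fun h => ⟨h, lt_of_lt_of_le hlt h⟩
        rw [h2]
        exact Ioi_ae_eq_Ici.symm
    rw [MeasureTheory.setIntegral_congr_set hint]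
    rw [integral_exp_neg_Ioi, neg_neg, Real.exp_log hx]

/-- the layer-cake comparison: the key pointwise inequality integrates to the
entropy bound (in nats) -/
lemma nat_entropy_bound (T N : ℕ) (c Mn : ℕ → ℝ)
    (hc0 : ∀ t, 0 ≤ c t) (hc1 : ∀ t, c t ≤ 1)
    (hM0 : ∀ a, 0 ≤ Mn a) (hM1 : ∀ a, Mn a ≤ 1)
    (key : ∀ ε : ℝ, 0 < ε →
      ∑ t ∈ Finset.range T, (if c t < ε then c t else 0)
        ≤ (∑ a ∈ Finset.range N, (if Mn a < ε then Mn a else 0))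
          + ∑ a ∈ Finset.range N, (if ε ≤ Mn a then ε else 0)) :
    ∑ t ∈ Finset.range T, c t * Real.log (c t)⁻¹
      ≤ (∑ a ∈ Finset.range N, Mn a * Real.log (Mn a)⁻¹) + ∑ a ∈ Finset.range N, Mn a := by
  have hLint : ∀ t ∈ Finset.range T,
      IntegrableOn (fun s : ℝ => if c t < Real.exp (-s) then c t else 0) (Ioi 0) :=
    fun t _ => g1_integrable (c t) (hc0 t)
  have hR1int : ∀ a ∈ Finset.range N,
      IntegrableOn (fun s : ℝ => if Mn a < Real.exp (-s) then Mn a else 0) (Ioi 0) :=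
    fun a _ => g1_integrable (Mn a) (hM0 a)
  have hR2int : ∀ a ∈ Finset.range N,
      IntegrableOn (fun s : ℝ => if Real.exp (-s) ≤ Mn a then Real.exp (-s) else 0) (Ioi 0) :=
    fun a _ => g2_integrable (Mn a)
  have hL : IntegrableOn
      (fun s : ℝ => ∑ t ∈ Finset.range T, (if c t < Real.exp (-s) then c t else 0)) (Ioi 0) :=
    MeasureTheory.integrable_finset_sum _ hLint
  have hR : IntegrableOn
      (fun s : ℝ => (∑ a ∈ Finset.range N, (if Mn a < Real.exp (-s) then Mn a else 0))
        + ∑ a ∈ Finset.range N, (if Real.exp (-s) ≤ Mn a then Real.exp (-s) else 0)) (Ioi 0) :=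
    (MeasureTheory.integrable_finset_sum _ hR1int).add
      (MeasureTheory.integrable_finset_sum _ hR2int)
  have hmono := MeasureTheory.setIntegral_mono_on hL hR measurableSet_Ioi
    (fun s _ => key (Real.exp (-s)) (Real.exp_pos _))
  rw [MeasureTheory.integral_finset_sum _ hLint] at hmono
  rw [MeasureTheory.integral_add (MeasureTheory.integrable_finset_sum _ hR1int)
    (MeasureTheory.integrable_finset_sum _ hR2int)] at hmono
  rw [MeasureTheory.integral_finset_sum _ hR1int] at hmono
  rw [MeasureTheory.integral_finset_sum _ hR2int] at hmono
  have e1 : ∀ t ∈ Finset.range T,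
      (∫ s in Ioi (0:ℝ), (if c t < Real.exp (-s) then c t else 0)) = c t * Real.log (c t)⁻¹ :=
    fun t _ => g1_integral (c t) (hc0 t) (hc1 t)
  have e2 : ∀ a ∈ Finset.range N,
      (∫ s in Ioi (0:ℝ), (if Mn a < Real.exp (-s) then Mn a else 0)) = Mn a * Real.log (Mn a)⁻¹ :=
    fun a _ => g1_integral (Mn a) (hM0 a) (hM1 a)
  have e3 : ∀ a ∈ Finset.range N,
      (∫ s in Ioi (0:ℝ), (if Real.exp (-s) ≤ Mn a then Real.exp (-s) else 0)) = Mn a :=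
    fun a _ => g2_integral (Mn a) (hM0 a) (hM1 a)
  rw [Finset.sum_congr rfl e1, Finset.sum_congr rfl e2, Finset.sum_congr rfl e3] at hmono
  exact hmono

end MECint

open MECaux MECaux2 MECaux3 MECaux4 MECint

/-- **Corollary (minimum entropy coupling is within `log₂ e` of `H(∧S)`).**
For any set `S = {p₁,…,p_m}` of sorted distributions on `n` states, with `M` the sorted
value sequence of `∧S`, there exists a coupling `C` of `S` (namely the greedy coupling)
with `H(C) ≤ H(∧S) + log₂ e`; in particular every minimum entropy coupling `OPT` of `S`
satisfies `H(OPT) ≤ H(∧S) + log₂ e`. -/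
theorem min_entropy_coupling_le_meet_add_log2e
    (m n : ℕ) [NeZero m] [NeZero n]
    (p : Fin m → Fin n → ℝ)
    (hsort : ∀ ℓ, Antitone (p ℓ)) (hpos : ∀ ℓ k, 0 ≤ p ℓ k) (hsum : ∀ ℓ, ∑ k, p ℓ k = 1)
    (M : Fin n → ℝ)
    (hM : ∀ i, M i =
      (univ.inf' univ_nonempty fun ℓ => ∑ j ∈ Iic i, p ℓ j) - ∑ j ∈ Iio i, M j) :
    (∃ C : ℕ → ℝ, IsCouplingOf C p ∧
      entC C ≤ (∑ i, M i * Real.logb 2 (M i)⁻¹) + Real.logb 2 (Real.exp 1)) ∧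
    (∀ OPT : ℕ → ℝ, IsCouplingOf OPT p →
      (∀ C' : ℕ → ℝ, IsCouplingOf C' p → entC OPT ≤ entC C') →
      entC OPT ≤ (∑ i, M i * Real.logb 2 (M i)⁻¹) + Real.logb 2 (Real.exp 1)) := by
  classical
  -- bridge between M and Mm
  have hIic : ∀ i : Fin n,
      (univ.inf' univ_nonempty fun ℓ => ∑ j ∈ Iic i, p ℓ j) = Bb p (i.val+1) := by
    intro i
    rw [Bb]
    congr 1
    funext ℓ
    rw [Ff]
    apply Finset.sum_congr _ (fun _ _ => rfl)
    ext j
    simp only [Finset.mem_Iic, Finset.mem_filter, Finset.mem_univ, true_and,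
      Fin.le_def, Nat.lt_succ_iff]
  have hsumIic : ∀ i : Fin n, ∑ j ∈ Iic i, M j = Bb p (i.val+1) := by
    intro i
    have h1 : ∑ j ∈ Iic i, M j = M i + ∑ j ∈ Iio i, M j := by
      rw [← Finset.Iio_insert, Finset.sum_insert (by simp)]
    rw [h1, hM i, hIic i]
    ring
  have hsumIio : ∀ i : Fin n, ∑ j ∈ Iio i, M j = Bb p i.val := by
    intro i
    rcases Nat.eq_zero_or_pos i.val with h0 | hposv
    · have hempty : (Iio i : Finset (Fin n)) = ∅ := by
        ext j
        simp only [Finset.mem_Iio, Finset.notMem_empty, iff_false]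
        intro hj
        rw [Fin.lt_def, h0] at hj
        omega
      rw [hempty, h0, Bb_zero]
      simp
    · obtain ⟨a, hia⟩ : ∃ a, i.val = a + 1 := ⟨i.val - 1, by omega⟩
      have han : a < n := by have := i.isLt; omega
      have hIioIic : (Iio i : Finset (Fin n)) = Iic ⟨a, han⟩ := by
        ext j
        simp only [Finset.mem_Iio, Finset.mem_Iic, Fin.lt_def, Fin.le_def, hia, Fin.val_mk]
        omega
      rw [hIioIic, hsumIic ⟨a, han⟩, hia]
  have hMM : ∀ i : Fin n, M i = Mm p i.val := by
    intro i
    have h1 := hsumIic i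
    have h2 := hsumIio i
    have h3 : ∑ j ∈ Iic i, M j = M i + ∑ j ∈ Iio i, M j := by
      rw [← Finset.Iio_insert, Finset.sum_insert (by simp)]
    rw [Mm]
    linarith [h3]
  -- conversion of the entropy of M
  have hMsum_conv : (∑ i, M i * Real.logb 2 (M i)⁻¹)
      = ∑ a ∈ Finset.range n, Mm p a * Real.logb 2 (Mm p a)⁻¹ := by
    rw [Finset.sum_congr rfl (fun i _ => by rw [hMM i])]
    exact Fin.sum_univ_eq_sum_range (fun a => Mm p a * Real.logb 2 (Mm p a)⁻¹) n
  set T := m * n with hT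
  -- the coupling property
  have hzero : ∀ t ∉ Finset.range T, gC p t = 0 := by
    intro t ht
    exact gC_zero_ge p hpos hsum t (by simpa using Finset.mem_range.not.mp ht)
  have hcoupling : IsCouplingOf (gC p) p := by
    refine ⟨gC_antitone p hpos, gC_nonneg p hpos, ?_, gf p, ?_, ?_⟩
    · have h : HasSum (gC p) _ := hasSum_sum_of_ne_finset_zero hzero
      rwa [gC_sum_one p hpos hsum] at h
    · intro j j' hj hj' hall
      by_contra hne
      rcases lt_trichotomy j j' with h | h | h
      · obtain ⟨ℓ, hℓ⟩ := separation p hpos j j' h hj'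
        exact hℓ (hall ℓ)
      · exact hne h
      · obtain ⟨ℓ, hℓ⟩ := separation p hpos j' j h hj
        exact hℓ (hall ℓ).symm
    · intro ℓ i
      show ∑' (jj : ↥{j : ℕ | gf p ℓ j = i}), gC p ↑jj = p ℓ i
      rw [tsum_subtype {j : ℕ | gf p ℓ j = i} (gC p)]
      rw [tsum_eq_sum (s := Finset.range T)
        (fun j hj => Set.indicator_apply_eq_zero.mpr (fun _ => hzero j hj))]
      have hconv : ∀ j ∈ Finset.range T,
          Set.indicator {j : ℕ | gf p ℓ j = i} (gC p) j
            = (if gf p ℓ j = i then gC p j else 0) := by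
        intro j _
        rw [Set.indicator_apply]
        simp only [Set.mem_setOf_eq]
      rw [Finset.sum_congr rfl hconv]
      exact marginal p hpos hsum ℓ i
  -- the entropy bound
  have hkey := fun ε hε => key p hsort hpos hsum ε hε
  have hnat := nat_entropy_bound T n (gC p) (Mm p)
    (gC_nonneg p hpos) (gC_le_one p hpos hsum)
    (Mm_nonneg p hpos) (Mm_le_one p hpos hsum) hkey
  have hMm1 : ∑ a ∈ Finset.range n, Mm p a = 1 := by
    rw [Mm_sum, Bb_full p hsum n (le_refl n)]
  rw [hMm1] at hnat
  have hlog2 : 0 < Real.log 2 := Real.log_pos one_lt_two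
  have hentC : entC (gC p) = (∑ t ∈ Finset.range T, gC p t * Real.log (gC p t)⁻¹) / Real.log 2 := by
    rw [entC, tsum_eq_sum (s := Finset.range T)
      (fun t ht => by rw [hzero t ht]; ring)]
    rw [Finset.sum_div]
    apply Finset.sum_congr rfl
    intro t _
    rw [Real.logb]
    ring
  have hentM : (∑ i, M i * Real.logb 2 (M i)⁻¹)
      = (∑ a ∈ Finset.range n, Mm p a * Real.log (Mm p a)⁻¹) / Real.log 2 := by
    rw [hMsum_conv, Finset.sum_div]
    apply Finset.sum_congr rfl
    intro a _
    rw [Real.logb]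
    ring
  have hloge : Real.logb 2 (Real.exp 1) = 1 / Real.log 2 := by
    rw [Real.logb, Real.log_exp]
  have hent : entC (gC p) ≤ (∑ i, M i * Real.logb 2 (M i)⁻¹) + Real.logb 2 (Real.exp 1) := by
    rw [hentC, hentM, hloge, ← add_div]
    exact div_le_div_of_nonneg_right hnat hlog2.le
  exact ⟨⟨gC p, hcoupling, hent⟩, fun OPT _ hmin => le_trans (hmin (gC p) hcoupling) hent⟩
end
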